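/- arXiv:2512.21158 — 5 statements merged into one kernel-verified Lean document; each statement's English description precedes it below -/
import Mathlib

section
/- Let d ≥ 1, let 𝒪 ⊆ ℝ^d be an open set, let p ≥ 2 and K > 0 and λ₁ > 0 be real numbers. Let u, v : 𝒪 → ℝ be differentiable functions such that u, v, ∇u and ∇v are square-integrable on 𝒪 and |u|^p and |v|^p are integrable on 𝒪, and suppose that the Poincaré inequality λ₁ ∫_𝒪 w(x)² dx ≤ ∫_𝒪 |∇w(x)|² dx holds for w = u, w = v and w = u − v. Then c_K(u) ∫_𝒪 u(x)(u(x) − v(x)) dx − c_K(v) ∫_𝒪 v(x)(u(x) − v(x)) dx ≤ (1/2) ∫_𝒪 |∇(u − v)(x)|² dx + C(K) ∫_𝒪 (u(x) − v(x))² dx + (1/4) ( ∫_𝒪 |u(x)|^{p−2}(u(x) − v(x))² dx + ∫_𝒪 |v(x)|^{p−2}(u(x) − v(x))² dx ), where C(K) = [1 + (2 + p² · 2^{2p−3}) K λ₁^{−1}] K. -/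
open MeasureTheory

open Real

section Aux

lemma gK_nonneg {K s : ℝ} (hK : 0 < K) (hs : 0 ≤ s) :
    0 ≤ if s ≤ K then s else K ^ 2 / s := by
  split_ifs with h
  · exact hs
  · positivity

lemma gK_le {K s : ℝ} (hK : 0 < K) (hs : 0 ≤ s) :
    (if s ≤ K then s else K ^ 2 / s) ≤ K := by
  split_ifs with h
  · exact h
  · push_neg at h
    rw [div_le_iff₀ (hK.trans h)]
    nlinarith

lemma gK_lip' {K s t : ℝ} (hK : 0 < K) (ht : 0 ≤ t) (hts : t ≤ s) :
    |(if s ≤ K then s else K ^ 2 / s) - (if t ≤ K then t else K ^ 2 / t)|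
      * (max s K * max t K) ≤ K ^ 2 * |s - t| := by
  have hs : 0 ≤ s := ht.trans hts
  rw [abs_of_nonneg (by linarith : (0:ℝ) ≤ s - t)]
  split_ifs with h1 h2 h2
  · -- s ≤ K, t ≤ K
    rw [max_eq_right h1, max_eq_right (h2 : t ≤ K), abs_of_nonneg (by linarith)]
    nlinarith
  · exact absurd (hts.trans h1) h2
  · -- K < s, t ≤ K
    push_neg at h1
    have hs0 : 0 < s := hK.trans h1
    rw [max_eq_left h1.le, max_eq_right h2]
    have key : |K ^ 2 - t * s| ≤ K * (s - t) := by
      rw [abs_le]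
      constructor <;> nlinarith
    have e0 : (K ^ 2 / s - t) * s = K ^ 2 - t * s := by field_simp
    have e1 : |K ^ 2 / s - t| * s = |K ^ 2 - t * s| := by
      rw [← e0, abs_mul, abs_of_pos hs0]
    calc |K ^ 2 / s - t| * (s * K) = (|K ^ 2 / s - t| * s) * K := by ring
      _ = |K ^ 2 - t * s| * K := by rw [e1]
      _ ≤ (K * (s - t)) * K := by
          exact mul_le_mul_of_nonneg_right key hK.le
      _ = K ^ 2 * (s - t) := by ring
  · -- K < s, K < t
    push_neg at h1 h2
    have hs0 : 0 < s := hK.trans h1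
    have ht0 : 0 < t := hK.trans h2
    rw [max_eq_left h1.le, max_eq_left h2.le]
    have e0 : (K ^ 2 / s - K ^ 2 / t) * (s * t) = -(K ^ 2 * (s - t)) := by
      field_simp
      ring
    have e1 : |K ^ 2 / s - K ^ 2 / t| * (s * t) = K ^ 2 * (s - t) := by
      rw [← abs_of_pos (mul_pos hs0 ht0), ← abs_mul, e0, abs_neg,
        abs_of_nonneg (by nlinarith : (0:ℝ) ≤ K ^ 2 * (s - t))]
    linarith [e1.le]

lemma gK_lip {K s t : ℝ} (hK : 0 < K) (hs : 0 ≤ s) (ht : 0 ≤ t) :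
    |(if s ≤ K then s else K ^ 2 / s) - (if t ≤ K then t else K ^ 2 / t)|
      * (max s K * max t K) ≤ K ^ 2 * |s - t| := by
  rcases le_total t s with h | h
  · exact gK_lip' hK ht h
  · have := gK_lip' hK hs h
    rw [abs_sub_comm, abs_sub_comm s t]
    calc _ = |(if t ≤ K then t else K ^ 2 / t) - if s ≤ K then s else K ^ 2 / s|
        * (max t K * max s K) := by ring
      _ ≤ K ^ 2 * |t - s| := this

lemma bernoulli_pow {a b p : ℝ} (hb : 0 ≤ b) (hba : b ≤ a) (hp : 1 ≤ p) :
    a ^ p - b ^ p ≤ p * a ^ (p - 1) * (a - b) := by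
  rcases eq_or_lt_of_le (hb.trans hba) with h0 | ha
  · have hb0 : b = 0 := le_antisymm (h0 ▸ hba) hb
    have ha0 : a = 0 := h0.symm
    have hp0 : p ≠ 0 := by linarith
    rw [ha0, hb0, Real.zero_rpow hp0]
    simp
  · have hap : (0:ℝ) < a ^ p := Real.rpow_pos_of_pos ha p
    have key := one_add_mul_self_le_rpow_one_add
      (s := b / a - 1) (by
        have : 0 ≤ b / a := div_nonneg hb ha.le
        linarith) hp
    have h4 : (1 + (b / a - 1)) ^ p = b ^ p / a ^ p := by
      rw [show 1 + (b / a - 1) = b / a by ring, Real.div_rpow hb ha.le]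
    rw [h4] at key
    have haa : a ^ (p - 1) * a = a ^ p := by
      rw [← Real.rpow_add_one (ne_of_gt ha) (p - 1)]
      norm_num
    have h5 : (b / a) * a ^ p = b * a ^ (p - 1) := by
      rw [← haa]
      field_simp
    have h3 : (1 + p * (b / a - 1)) * a ^ p ≤ b ^ p := by
      have := mul_le_mul_of_nonneg_right key hap.le
      calc (1 + p * (b / a - 1)) * a ^ p ≤ b ^ p / a ^ p * a ^ p := this
        _ = b ^ p := by field_simp
    nlinarith [h3, h5]

lemma pw_pow_diff' {x y p : ℝ} (hp : 2 ≤ p) (h : |y| ≤ |x|) :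
    |x| ^ p - |y| ^ p ≤ p * (|x| ^ (p - 1) + |y| ^ (p - 1)) * |x - y| := by
  have h2 := bernoulli_pow (abs_nonneg y) h (by linarith : (1:ℝ) ≤ p)
  have h3 : |x| - |y| ≤ |x - y| := abs_sub_abs_le_abs_sub x y
  have h4 : (0:ℝ) ≤ |x| ^ (p - 1) := Real.rpow_nonneg (abs_nonneg x) _
  have h5 : (0:ℝ) ≤ |y| ^ (p - 1) := Real.rpow_nonneg (abs_nonneg y) _
  have h6 : (0:ℝ) ≤ |x - y| := abs_nonneg _
  nlinarith [h2, mul_le_mul_of_nonneg_left h3 (by positivity : (0:ℝ) ≤ p * |x| ^ (p-1)),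
    mul_nonneg (mul_nonneg (by linarith : (0:ℝ) ≤ p) h5) h6]

lemma pw_pow_diff {x y p : ℝ} (hp : 2 ≤ p) :
    abs (|x| ^ p - |y| ^ p) ≤ p * (|x| ^ (p - 1) + |y| ^ (p - 1)) * |x - y| := by
  rcases le_total |y| |x| with h | h
  · have h1 : |y| ^ p ≤ |x| ^ p := Real.rpow_le_rpow (abs_nonneg y) h (by linarith)
    rw [abs_of_nonneg (by linarith)]
    exact pw_pow_diff' hp h
  · have h1 : |x| ^ p ≤ |y| ^ p := Real.rpow_le_rpow (abs_nonneg x) h (by linarith)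
    rw [abs_of_nonpos (by linarith)]
    have := pw_pow_diff' hp h
    rw [abs_sub_comm y x] at this
    linarith

lemma rpow_mul_rpow_le {a b r s : ℝ} (ha : 0 ≤ a) (hb : 0 ≤ b) (hr : 0 ≤ r) (hs : 0 ≤ s)
    (hrs : r + s ≠ 0) : a ^ r * b ^ s ≤ a ^ (r + s) + b ^ (r + s) := by
  have hM : 0 ≤ max a b := ha.trans (le_max_left a b)
  have h1 : a ^ r ≤ max a b ^ r := Real.rpow_le_rpow ha (le_max_left a b) hr
  have h2 : b ^ s ≤ max a b ^ s := Real.rpow_le_rpow hb (le_max_right a b) hs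
  have h3 : max a b ^ r * max a b ^ s = max a b ^ (r + s) := (Real.rpow_add' hM hrs).symm
  have h4 : max a b ^ (r + s) ≤ a ^ (r + s) + b ^ (r + s) := by
    rcases max_choice a b with h | h <;> rw [h]
    · exact le_add_of_nonneg_right (Real.rpow_nonneg hb _)
    · exact le_add_of_nonneg_left (Real.rpow_nonneg ha _)
  calc a ^ r * b ^ s ≤ max a b ^ r * max a b ^ s :=
        mul_le_mul h1 h2 (Real.rpow_nonneg hb s) (Real.rpow_nonneg hM r)
    _ = max a b ^ (r + s) := h3
    _ ≤ _ := h4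

lemma mul_int {α : Type*} [MeasurableSpace α] {μ : Measure α} {f g : α → ℝ}
    (hf : AEStronglyMeasurable f μ) (hg : AEStronglyMeasurable g μ)
    (hf0 : ∀ x, 0 ≤ f x) (hg0 : ∀ x, 0 ≤ g x)
    (hf2 : Integrable (fun x => f x ^ 2) μ) (hg2 : Integrable (fun x => g x ^ 2) μ) :
    Integrable (fun x => f x * g x) μ := by
  refine Integrable.mono' (hf2.add hg2) (hf.mul hg) (Filter.Eventually.of_forall fun x => ?_)
  rw [Real.norm_eq_abs, abs_of_nonneg (mul_nonneg (hf0 x) (hg0 x))]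
  simp only [Pi.add_apply]
  nlinarith [sq_nonneg (f x - g x)]

lemma cs_integral {α : Type*} [MeasurableSpace α] {μ : Measure α} {f g : α → ℝ}
    (hf : AEStronglyMeasurable f μ) (hg : AEStronglyMeasurable g μ)
    (hf0 : ∀ x, 0 ≤ f x) (hg0 : ∀ x, 0 ≤ g x)
    (hf2 : Integrable (fun x => f x ^ 2) μ) (hg2 : Integrable (fun x => g x ^ 2) μ) :
    ∫ x, f x * g x ∂μ ≤
      Real.sqrt (∫ x, f x ^ 2 ∂μ) * Real.sqrt (∫ x, g x ^ 2 ∂μ) := by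
  have hfg : Integrable (fun x => f x * g x) μ := mul_int hf hg hf0 hg0 hf2 hg2
  set A := ∫ x, f x ^ 2 ∂μ with hA
  set B := ∫ x, g x ^ 2 ∂μ with hB
  have hA0 : 0 ≤ A := integral_nonneg fun x => sq_nonneg _
  have hB0 : 0 ≤ B := integral_nonneg fun x => sq_nonneg _
  rcases eq_or_lt_of_le hA0 with hA1 | hA1
  · have hf00 : (fun x => f x ^ 2) =ᵐ[μ] 0 :=
      (integral_eq_zero_iff_of_nonneg (fun x => sq_nonneg _) hf2).mp hA1.symm
    have hae : (fun x => f x * g x) =ᵐ[μ] 0 := by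
      filter_upwards [hf00] with x hx
      have hx0 : f x = 0 := by
        have hx' : f x ^ 2 = 0 := by simpa using hx
        exact pow_eq_zero_iff (two_ne_zero) |>.mp hx'
      simp [hx0]
    have hI : ∫ x, f x * g x ∂μ = 0 := by
      rw [integral_congr_ae hae]
      simp
    rw [hI]
    positivity
  rcases eq_or_lt_of_le hB0 with hB1 | hB1
  · have hg00 : (fun x => g x ^ 2) =ᵐ[μ] 0 :=
      (integral_eq_zero_iff_of_nonneg (fun x => sq_nonneg _) hg2).mp hB1.symm
    have hae : (fun x => f x * g x) =ᵐ[μ] 0 := by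
      filter_upwards [hg00] with x hx
      have hx0 : g x = 0 := by
        have hx' : g x ^ 2 = 0 := by simpa using hx
        exact pow_eq_zero_iff (two_ne_zero) |>.mp hx'
      simp [hx0]
    have hI : ∫ x, f x * g x ∂μ = 0 := by
      rw [integral_congr_ae hae]
      simp
    rw [hI]
    positivity
  · set sa := Real.sqrt A with hsa
    set sb := Real.sqrt B with hsb
    have hsa0 : 0 < sa := Real.sqrt_pos.mpr hA1
    have hsb0 : 0 < sb := Real.sqrt_pos.mpr hB1
    have hsa2 : sa ^ 2 = A := Real.sq_sqrt hA0
    have hsb2 : sb ^ 2 = B := Real.sq_sqrt hB0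
    have key : ∫ x, 2 * sa * sb * (f x * g x) ∂μ ≤
        ∫ x, (sb ^ 2 * f x ^ 2 + sa ^ 2 * g x ^ 2) ∂μ := by
      apply integral_mono ((hfg.const_mul _)) ((hf2.const_mul _).add (hg2.const_mul _))
      intro x
      simp only [Pi.add_apply]
      nlinarith [sq_nonneg (sb * f x - sa * g x)]
    rw [integral_const_mul, integral_add (hf2.const_mul _) (hg2.const_mul _),
      integral_const_mul, integral_const_mul] at key
    have h9 : (2 * sa * sb) * (∫ x, f x * g x ∂μ) ≤ (2 * sa * sb) * (sa * sb) := by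
      nlinarith [key]
    exact le_of_mul_le_mul_left h9 (by positivity)

lemma one_side_sq_bound {α : Type*} [MeasurableSpace α] {μ : Measure α} {f g h : α → ℝ}
    (hf : AEStronglyMeasurable f μ) (hg : AEStronglyMeasurable g μ)
    (hh : AEStronglyMeasurable h μ)
    (hf0 : ∀ x, 0 ≤ f x) (hg0 : ∀ x, 0 ≤ g x) (hh0 : ∀ x, 0 ≤ h x)
    (hf2 : Integrable (fun x => f x ^ 2) μ) (hg2 : Integrable (fun x => g x ^ 2) μ)
    (hh2 : Integrable (fun x => h x ^ 2) μ)
    (htri : ∀ x, |f x - g x| ≤ h x) :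
    (∫ x, f x ^ 2 ∂μ) - ∫ x, g x ^ 2 ∂μ ≤
      Real.sqrt (∫ x, h x ^ 2 ∂μ) *
        (Real.sqrt (∫ x, f x ^ 2 ∂μ) + Real.sqrt (∫ x, g x ^ 2 ∂μ)) := by
  have hint1 : Integrable (fun x => h x * f x) μ := mul_int hh hf hh0 hf0 hh2 hf2
  have hint2 : Integrable (fun x => h x * g x) μ := mul_int hh hg hh0 hg0 hh2 hg2
  have key : ∫ x, (f x ^ 2 - g x ^ 2) ∂μ ≤ ∫ x, (h x * f x + h x * g x) ∂μ := by
    apply integral_mono (hf2.sub hg2) (hint1.add hint2)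
    intro x
    simp only [Pi.add_apply, Pi.sub_apply]
    have h1 : f x - g x ≤ |f x - g x| := le_abs_self _
    have h2 := htri x
    nlinarith [hf0 x, hg0 x, hh0 x, mul_le_mul_of_nonneg_right ((le_abs_self _).trans (htri x))
      (add_nonneg (hf0 x) (hg0 x))]
  rw [integral_sub hf2 hg2, integral_add hint1 hint2] at key
  have c1 := cs_integral hh hf hh0 hf0 hh2 hf2
  have c2 := cs_integral hh hg hh0 hg0 hh2 hg2
  nlinarith [key, c1, c2]

lemma diff_sq_bound {α : Type*} [MeasurableSpace α] {μ : Measure α} {f g h : α → ℝ}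
    (hf : AEStronglyMeasurable f μ) (hg : AEStronglyMeasurable g μ)
    (hh : AEStronglyMeasurable h μ)
    (hf0 : ∀ x, 0 ≤ f x) (hg0 : ∀ x, 0 ≤ g x) (hh0 : ∀ x, 0 ≤ h x)
    (hf2 : Integrable (fun x => f x ^ 2) μ) (hg2 : Integrable (fun x => g x ^ 2) μ)
    (hh2 : Integrable (fun x => h x ^ 2) μ)
    (htri : ∀ x, |f x - g x| ≤ h x) :
    |(∫ x, f x ^ 2 ∂μ) - ∫ x, g x ^ 2 ∂μ| ≤
      Real.sqrt (∫ x, h x ^ 2 ∂μ) *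
        (Real.sqrt (∫ x, f x ^ 2 ∂μ) + Real.sqrt (∫ x, g x ^ 2 ∂μ)) := by
  rw [abs_le]
  constructor
  · have := one_side_sq_bound hg hf hh hg0 hf0 hh0 hg2 hf2 hh2
      (fun x => by rw [abs_sub_comm]; exact htri x)
    linarith
  · exact one_side_sq_bound hf hg hh hf0 hg0 hh0 hf2 hg2 hh2 htri

lemma sqrt_rpow_prod {a : ℝ} (ha : 0 ≤ a) {p : ℝ} (hp : 2 ≤ p) :
    Real.sqrt (a ^ (p - 2)) * Real.sqrt (a ^ p) = a ^ (p - 1) := by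
  rw [← Real.sqrt_mul (Real.rpow_nonneg ha _)]
  have e : a ^ (p - 2) * a ^ p = (a ^ (p - 1)) ^ 2 := by
    rcases eq_or_lt_of_le ha with h0 | h0
    · rw [← h0, Real.zero_rpow (by linarith : p ≠ 0),
        Real.zero_rpow (by linarith : p - 1 ≠ 0)]
      ring
    · rw [sq, ← Real.rpow_add h0, ← Real.rpow_add h0]
      congr 1
      ring
  rw [e, Real.sqrt_sq (Real.rpow_nonneg ha _)]

lemma holder_pow {α : Type*} [MeasurableSpace α] [TopologicalSpace α]
    [OpensMeasurableSpace α] {μ : Measure α} {w D : α → ℝ} {p : ℝ} (hp : 2 ≤ p)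
    (hw : Continuous w) (hD : Continuous D)
    (hwp : Integrable (fun x => |w x| ^ p) μ)
    (hQ : Integrable (fun x => |w x| ^ (p - 2) * D x ^ 2) μ) :
    ∫ x, |w x| ^ (p - 1) * |D x| ∂μ ≤
      Real.sqrt (∫ x, |w x| ^ (p - 2) * D x ^ 2 ∂μ) *
        Real.sqrt (∫ x, |w x| ^ p ∂μ) := by
  set f := fun x => Real.sqrt (|w x| ^ (p - 2)) * |D x| with hf_def
  set g := fun x => Real.sqrt (|w x| ^ p) with hg_def
  have hcf : Continuous f := by
    apply Continuous.mul _ hD.abs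
    exact Real.continuous_sqrt.comp (hw.abs.rpow_const fun x => Or.inr (by linarith))
  have hcg : Continuous g :=
    Real.continuous_sqrt.comp (hw.abs.rpow_const fun x => Or.inr (by linarith))
  have hfsq : (fun x => f x ^ 2) = fun x => |w x| ^ (p - 2) * D x ^ 2 := by
    funext x
    simp only [hf_def, mul_pow, Real.sq_sqrt (Real.rpow_nonneg (abs_nonneg _) _), sq_abs]
  have hgsq : (fun x => g x ^ 2) = fun x => |w x| ^ p := by
    funext x
    exact Real.sq_sqrt (Real.rpow_nonneg (abs_nonneg _) _)
  have hfg : (fun x => f x * g x) = fun x => |w x| ^ (p - 1) * |D x| := by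
    funext x
    simp only [hf_def, hg_def]
    rw [mul_right_comm, sqrt_rpow_prod (abs_nonneg _) hp]
  have := cs_integral hcf.aestronglyMeasurable hcg.aestronglyMeasurable
    (fun x => mul_nonneg (Real.sqrt_nonneg _) (abs_nonneg _))
    (fun x => Real.sqrt_nonneg _)
    (hfsq ▸ hQ) (hgsq ▸ hwp)
  rw [show (∫ x, f x * g x ∂μ) = ∫ x, |w x| ^ (p - 1) * |D x| ∂μ by rw [hfg],
    show (∫ x, f x ^ 2 ∂μ) = ∫ x, |w x| ^ (p - 2) * D x ^ 2 ∂μ by rw [hfsq],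
    show (∫ x, g x ^ 2 ∂μ) = ∫ x, |w x| ^ p ∂μ by rw [hgsq]] at this
  exact this

lemma young_a {A B : ℝ} : 2 * A * B ≤ (1/2) * A ^ 2 + 2 * B ^ 2 := by
  nlinarith [sq_nonneg (A - 2 * B)]

lemma young_b {A B : ℝ} : A * B ≤ (1/4) * A ^ 2 + B ^ 2 := by
  nlinarith [sq_nonneg (A - 2 * B)]

set_option maxHeartbeats 1000000 in
lemma final_algebra {K lam p a b Eu Ev Pu Pv Nu Nv ND Gd Qu Qv : ℝ}
    (hK : 0 < K) (hlam : 0 < lam) (hp : 2 ≤ p)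
    (hEu : 0 ≤ Eu) (hEv : 0 ≤ Ev) (hPu : 0 ≤ Pu) (hPv : 0 ≤ Pv)
    (hND : 0 ≤ ND) (hGd : 0 ≤ Gd) (hQu : 0 ≤ Qu) (hQv : 0 ≤ Qv)
    (hNu : 0 ≤ Nu) (hNv : 0 ≤ Nv)
    (ha0 : 0 ≤ a) (haK : a ≤ K) (hb0 : 0 ≤ b) (hbK : b ≤ K)
    (hab : |a - b| * (max (Eu + Pu) K * max (Ev + Pv) K) ≤ K ^ 2 * |(Eu + Pu) - (Ev + Pv)|)
    (hE : |Eu - Ev| ≤ Real.sqrt Gd * (Real.sqrt Eu + Real.sqrt Ev))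
    (hP : |Pu - Pv| ≤ p * (Real.sqrt Qu * Real.sqrt Pu + Real.sqrt Qv * Real.sqrt Pv))
    (hN : |Nu - Nv| ≤ Real.sqrt ND * (Real.sqrt Nu + Real.sqrt Nv))
    (hPoiu : lam * Nu ≤ Eu) (hPoiv : lam * Nv ≤ Ev) :
    (a - b) * (Nu - Nv) / 2 + (a + b) * ND / 2 ≤
      (1 / 2) * Gd + ((1 + (2 + p ^ 2 * (2:ℝ) ^ (2 * p - 3)) * K * lam⁻¹) * K) * ND
        + (1 / 4) * (Qu + Qv) := by
  have hp0 : (0:ℝ) ≤ p := by linarith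
  set ms := Real.sqrt (max (Eu + Pu) K) with hms_def
  set mt := Real.sqrt (max (Ev + Pv) K) with hmt_def
  set gd := Real.sqrt Gd with hgd_def
  set nd := Real.sqrt ND with hnd_def
  set qu := Real.sqrt Qu with hqu_def
  set qv := Real.sqrt Qv with hqv_def
  set l := Real.sqrt lam⁻¹ with hl_def
  have hms0 : 0 ≤ ms := Real.sqrt_nonneg _
  have hmt0 : 0 ≤ mt := Real.sqrt_nonneg _
  have hgd0 : 0 ≤ gd := Real.sqrt_nonneg _
  have hnd0 : 0 ≤ nd := Real.sqrt_nonneg _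
  have hqu0 : 0 ≤ qu := Real.sqrt_nonneg _
  have hqv0 : 0 ≤ qv := Real.sqrt_nonneg _
  have hl0 : 0 ≤ l := Real.sqrt_nonneg _
  have hms2 : ms ^ 2 = max (Eu + Pu) K := Real.sq_sqrt (le_max_of_le_right hK.le)
  have hmt2 : mt ^ 2 = max (Ev + Pv) K := Real.sq_sqrt (le_max_of_le_right hK.le)
  have hgd2 : gd ^ 2 = Gd := Real.sq_sqrt hGd
  have hnd2 : nd ^ 2 = ND := Real.sq_sqrt hND
  have hqu2 : qu ^ 2 = Qu := Real.sq_sqrt hQu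
  have hqv2 : qv ^ 2 = Qv := Real.sq_sqrt hQv
  have hl2 : l ^ 2 = lam⁻¹ := Real.sq_sqrt (by positivity)
  have hKms : K ≤ ms ^ 2 := by rw [hms2]; exact le_max_right _ _
  have hKmt : K ≤ mt ^ 2 := by rw [hmt2]; exact le_max_right _ _
  have hKmsmt : K ≤ ms * mt := by
    have h1 : Real.sqrt K ≤ ms := by
      rw [hms_def]; exact Real.sqrt_le_sqrt (le_max_right _ _)
    have h2 : Real.sqrt K ≤ mt := by
      rw [hmt_def]; exact Real.sqrt_le_sqrt (le_max_right _ _)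
    calc K = Real.sqrt K * Real.sqrt K := (Real.mul_self_sqrt hK.le).symm
      _ ≤ ms * mt := mul_le_mul h1 h2 (Real.sqrt_nonneg _) hms0
  have heu : Real.sqrt Eu ≤ ms := by
    rw [hms_def]
    exact Real.sqrt_le_sqrt (le_trans (le_add_of_nonneg_right hPu) (le_max_left _ _))
  have hev : Real.sqrt Ev ≤ mt := by
    rw [hmt_def]
    exact Real.sqrt_le_sqrt (le_trans (le_add_of_nonneg_right hPv) (le_max_left _ _))
  have hpu : Real.sqrt Pu ≤ ms := by
    rw [hms_def]
    exact Real.sqrt_le_sqrt (le_trans (le_add_of_nonneg_left hEu) (le_max_left _ _))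
  have hpv : Real.sqrt Pv ≤ mt := by
    rw [hmt_def]
    exact Real.sqrt_le_sqrt (le_trans (le_add_of_nonneg_left hEv) (le_max_left _ _))
  have hnu : Real.sqrt Nu ≤ l * ms := by
    have h1 : Nu ≤ lam⁻¹ * max (Eu + Pu) K := by
      have h2 : lam⁻¹ * (lam * Nu) ≤ lam⁻¹ * Eu :=
        mul_le_mul_of_nonneg_left hPoiu (by positivity)
      rw [← mul_assoc, inv_mul_cancel₀ (ne_of_gt hlam), one_mul] at h2
      refine h2.trans (mul_le_mul_of_nonneg_left ?_ (by positivity))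
      exact le_trans (le_add_of_nonneg_right hPu) (le_max_left _ _)
    calc Real.sqrt Nu ≤ Real.sqrt (lam⁻¹ * max (Eu + Pu) K) := Real.sqrt_le_sqrt h1
      _ = l * ms := by rw [hl_def, hms_def, Real.sqrt_mul (by positivity)]
  have hnv : Real.sqrt Nv ≤ l * mt := by
    have h1 : Nv ≤ lam⁻¹ * max (Ev + Pv) K := by
      have h2 : lam⁻¹ * (lam * Nv) ≤ lam⁻¹ * Ev :=
        mul_le_mul_of_nonneg_left hPoiv (by positivity)
      rw [← mul_assoc, inv_mul_cancel₀ (ne_of_gt hlam), one_mul] at h2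
      refine h2.trans (mul_le_mul_of_nonneg_left ?_ (by positivity))
      exact le_trans (le_add_of_nonneg_right hPv) (le_max_left _ _)
    calc Real.sqrt Nv ≤ Real.sqrt (lam⁻¹ * max (Ev + Pv) K) := Real.sqrt_le_sqrt h1
      _ = l * mt := by rw [hl_def, hmt_def, Real.sqrt_mul (by positivity)]
  have hN' : |Nu - Nv| ≤ nd * (l * ms + l * mt) :=
    le_trans hN (mul_le_mul_of_nonneg_left (add_le_add hnu hnv) hnd0)
  have hE' : |Eu - Ev| ≤ gd * (ms + mt) :=
    le_trans hE (mul_le_mul_of_nonneg_left (add_le_add heu hev) hgd0)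
  have hP' : |Pu - Pv| ≤ p * (qu * ms + qv * mt) :=
    le_trans hP (mul_le_mul_of_nonneg_left
      (add_le_add (mul_le_mul_of_nonneg_left hpu hqu0)
        (mul_le_mul_of_nonneg_left hpv hqv0)) hp0)
  have hRHS0 : (0:ℝ) ≤ gd * (ms + mt) + p * (qu * ms + qv * mt) :=
    add_nonneg (mul_nonneg hgd0 (add_nonneg hms0 hmt0))
      (mul_nonneg hp0 (add_nonneg (mul_nonneg hqu0 hms0) (mul_nonneg hqv0 hmt0)))
  have hab' : |a - b| * (ms ^ 2 * mt ^ 2) ≤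
      K ^ 2 * (gd * (ms + mt) + p * (qu * ms + qv * mt)) := by
    rw [hms2, hmt2]
    refine le_trans hab ?_
    have h1 : |Eu + Pu - (Ev + Pv)| ≤ |Eu - Ev| + |Pu - Pv| := by
      calc |Eu + Pu - (Ev + Pv)| = |(Eu - Ev) + (Pu - Pv)| := by ring_nf
        _ ≤ _ := abs_add_le _ _
    exact mul_le_mul_of_nonneg_left (h1.trans (by linarith only [hE', hP'])) (sq_nonneg K)
  have e1 : K * ms ^ 2 ≤ ms ^ 2 * mt ^ 2 := by
    linarith only [mul_le_mul_of_nonneg_right hKmt (sq_nonneg ms)]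
  have e2 : K * mt ^ 2 ≤ ms ^ 2 * mt ^ 2 := by
    linarith only [mul_le_mul_of_nonneg_right hKms (sq_nonneg mt)]
  have e3 : K * (ms * mt) ≤ ms ^ 2 * mt ^ 2 := by
    linarith only [mul_le_mul_of_nonneg_right hKmsmt (mul_nonneg hms0 hmt0)]
  have c1 : K * (ms + mt) ^ 2 ≤ 4 * (ms ^ 2 * mt ^ 2) := by linarith only [e1, e2, e3]
  have c2 : K * ((qu * ms + qv * mt) * (ms + mt)) ≤ 2 * (qu + qv) * (ms ^ 2 * mt ^ 2) := by
    linarith only [mul_le_mul_of_nonneg_left e1 hqu0, mul_le_mul_of_nonneg_left e3 hqu0,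
      mul_le_mul_of_nonneg_left e2 hqv0, mul_le_mul_of_nonneg_left e3 hqv0]
  have claim1 : K ^ 2 * ((gd * (ms + mt) + p * (qu * ms + qv * mt)) * (ms + mt)) ≤
      (4 * K * gd + 2 * K * p * (qu + qv)) * (ms ^ 2 * mt ^ 2) := by
    linarith only [mul_le_mul_of_nonneg_left c1 (mul_nonneg hK.le hgd0),
      mul_le_mul_of_nonneg_left c2 (mul_nonneg hK.le hp0)]
  have hms2mt2 : (0:ℝ) < ms ^ 2 * mt ^ 2 :=
    mul_pos (lt_of_lt_of_le hK hKms) (lt_of_lt_of_le hK hKmt)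
  have stepA : |a - b| * |Nu - Nv| ≤ (4 * K * gd + 2 * K * p * (qu + qv)) * (l * nd) := by
    apply le_of_mul_le_mul_right _ hms2mt2
    calc |a - b| * |Nu - Nv| * (ms ^ 2 * mt ^ 2)
        = (|a - b| * (ms ^ 2 * mt ^ 2)) * |Nu - Nv| := by ring
      _ ≤ (K ^ 2 * (gd * (ms + mt) + p * (qu * ms + qv * mt))) * (nd * (l * ms + l * mt)) :=
          mul_le_mul hab' hN' (abs_nonneg _) (mul_nonneg (sq_nonneg K) hRHS0)
      _ = K ^ 2 * ((gd * (ms + mt) + p * (qu * ms + qv * mt)) * (ms + mt)) * (l * nd) := by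
          ring
      _ ≤ ((4 * K * gd + 2 * K * p * (qu + qv)) * (ms ^ 2 * mt ^ 2)) * (l * nd) :=
          mul_le_mul_of_nonneg_right claim1 (mul_nonneg hl0 hnd0)
      _ = (4 * K * gd + 2 * K * p * (qu + qv)) * (l * nd) * (ms ^ 2 * mt ^ 2) := by ring
  have habs : (a - b) * (Nu - Nv) ≤ |a - b| * |Nu - Nv| := by
    calc (a - b) * (Nu - Nv) ≤ |(a - b) * (Nu - Nv)| := le_abs_self _
      _ = |a - b| * |Nu - Nv| := abs_mul _ _
  have young1 : 2 * K * l * gd * nd ≤ (1/2) * gd ^ 2 + 2 * K ^ 2 * l ^ 2 * nd ^ 2 := by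
    linarith only [young_a (A := gd) (B := K * l * nd)]
  have young2 : K * p * l * nd * qu ≤ (1/4) * qu ^ 2 + K ^ 2 * p ^ 2 * l ^ 2 * nd ^ 2 := by
    linarith only [young_b (A := qu) (B := K * p * l * nd)]
  have young3 : K * p * l * nd * qv ≤ (1/4) * qv ^ 2 + K ^ 2 * p ^ 2 * l ^ 2 * nd ^ 2 := by
    linarith only [young_b (A := qv) (B := K * p * l * nd)]
  have h2p : (2:ℝ) ≤ (2:ℝ) ^ (2 * p - 3) := by
    have h := Real.rpow_le_rpow_of_exponent_le (by norm_num : (1:ℝ) ≤ 2)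
      (by linarith : (1:ℝ) ≤ 2 * p - 3)
    rwa [Real.rpow_one] at h
  have h2p' : 2 * (p ^ 2 * K ^ 2 * l ^ 2 * nd ^ 2) ≤
      (2:ℝ) ^ (2 * p - 3) * (p ^ 2 * K ^ 2 * l ^ 2 * nd ^ 2) :=
    mul_le_mul_of_nonneg_right h2p (by positivity)
  have hKND : (a + b) * nd ^ 2 / 2 ≤ K * nd ^ 2 := by
    have h := mul_le_mul_of_nonneg_right
      (show a + b ≤ 2 * K by linarith only [haK, hbK]) (sq_nonneg nd)
    linarith only [h]
  have main1 : (a - b) * (Nu - Nv) / 2 ≤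
      (1/2) * gd ^ 2 + (2 * K ^ 2 * l ^ 2 + 2 * K ^ 2 * p ^ 2 * l ^ 2) * nd ^ 2
        + (1/4) * (qu ^ 2 + qv ^ 2) := by
    linarith only [habs, stepA, young1, young2, young3]
  rw [← hgd2, ← hnd2, ← hqu2, ← hqv2, ← hl2]
  linarith only [main1, h2p', hKND]

end Aux

/-- The cut-off coefficient `c_K(w)` of the paper: with
`E(w) = ∫_𝒪 ‖∇w‖²` and `P(w) = ∫_𝒪 |w|^p`, it equals `E(w) + P(w)` when
`E(w) + P(w) ≤ K`, and `K² / (E(w) + P(w))` otherwise. -/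
noncomputable def cutoffCoeff {d : ℕ} (𝒪 : Set (EuclideanSpace ℝ (Fin d)))
    (p K : ℝ) (w : EuclideanSpace ℝ (Fin d) → ℝ) : ℝ :=
  if (∫ x in 𝒪, ‖gradient w x‖ ^ 2) + (∫ x in 𝒪, |w x| ^ p) ≤ K then
    (∫ x in 𝒪, ‖gradient w x‖ ^ 2) + (∫ x in 𝒪, |w x| ^ p)
  else K ^ 2 / ((∫ x in 𝒪, ‖gradient w x‖ ^ 2) + (∫ x in 𝒪, |w x| ^ p))

set_option maxHeartbeats 1000000 in
theorem stmt_2 (d : ℕ) (hd : 1 ≤ d)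
    (𝒪 : Set (EuclideanSpace ℝ (Fin d))) (h𝒪 : IsOpen 𝒪)
    (p K lam : ℝ) (hp : 2 ≤ p) (hK : 0 < K) (hlam : 0 < lam)
    (u v : EuclideanSpace ℝ (Fin d) → ℝ)
    (hu : Differentiable ℝ u) (hv : Differentiable ℝ v)
    (hu2 : IntegrableOn (fun x => (u x) ^ 2) 𝒪)
    (hv2 : IntegrableOn (fun x => (v x) ^ 2) 𝒪)
    (hgu2 : IntegrableOn (fun x => ‖gradient u x‖ ^ 2) 𝒪)
    (hgv2 : IntegrableOn (fun x => ‖gradient v x‖ ^ 2) 𝒪)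
    (hup : IntegrableOn (fun x => |u x| ^ p) 𝒪)
    (hvp : IntegrableOn (fun x => |v x| ^ p) 𝒪)
    (hPoincare : ∀ w : EuclideanSpace ℝ (Fin d) → ℝ,
      w = u ∨ w = v ∨ w = u - v →
      lam * ∫ x in 𝒪, (w x) ^ 2 ≤ ∫ x in 𝒪, ‖gradient w x‖ ^ 2) :
    cutoffCoeff 𝒪 p K u * (∫ x in 𝒪, u x * (u x - v x))
      - cutoffCoeff 𝒪 p K v * (∫ x in 𝒪, v x * (u x - v x))
    ≤ (1 / 2) * (∫ x in 𝒪, ‖gradient (u - v) x‖ ^ 2)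
      + ((1 + (2 + p ^ 2 * (2 : ℝ) ^ (2 * p - 3)) * K * lam⁻¹) * K)
          * (∫ x in 𝒪, (u x - v x) ^ 2)
      + (1 / 4) * ((∫ x in 𝒪, |u x| ^ (p - 2) * (u x - v x) ^ 2)
          + (∫ x in 𝒪, |v x| ^ (p - 2) * (u x - v x) ^ 2)) := by
  have hp0 : (0:ℝ) ≤ p := by linarith
  have hcu : Continuous u := hu.continuous
  have hcv : Continuous v := hv.continuous
  have hcD : Continuous fun x => u x - v x := hcu.sub hcv
  -- gradient vs fderiv
  have hng : ∀ (f : EuclideanSpace ℝ (Fin d) → ℝ) (x), ‖gradient f x‖ = ‖fderiv ℝ f x‖ := by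
    intro f x
    unfold gradient
    exact LinearIsometryEquiv.norm_map _ _
  have hfd : ∀ x, fderiv ℝ (u - v) x = fderiv ℝ u x - fderiv ℝ v x := fun x =>
    fderiv_sub (hu x) (hv x)
  have htri_g : ∀ x, |‖gradient u x‖ - ‖gradient v x‖| ≤ ‖gradient (u - v) x‖ := by
    intro x
    rw [hng, hng, hng, hfd]
    exact abs_norm_sub_norm_le _ _
  -- measurability of gradient norms
  have hm_gu : AEStronglyMeasurable (fun x => ‖gradient u x‖) (volume.restrict 𝒪) := by
    have h2 : (fun x => ‖gradient u x‖) = fun x => ‖fderiv ℝ u x‖ := funext fun x => hng u x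
    rw [h2]
    exact ((measurable_fderiv ℝ u).norm).aestronglyMeasurable.restrict
  have hm_gv : AEStronglyMeasurable (fun x => ‖gradient v x‖) (volume.restrict 𝒪) := by
    have h2 : (fun x => ‖gradient v x‖) = fun x => ‖fderiv ℝ v x‖ := funext fun x => hng v x
    rw [h2]
    exact ((measurable_fderiv ℝ v).norm).aestronglyMeasurable.restrict
  have hm_gD : AEStronglyMeasurable (fun x => ‖gradient (u - v) x‖) (volume.restrict 𝒪) := by
    have h2 : (fun x => ‖gradient (u - v) x‖) = fun x => ‖fderiv ℝ (u - v) x‖ :=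
      funext fun x => hng _ x
    rw [h2]
    exact ((measurable_fderiv ℝ (u - v)).norm).aestronglyMeasurable.restrict
  -- integrability of (u-v)^2
  have hD2 : IntegrableOn (fun x => (u x - v x) ^ 2) 𝒪 := by
    refine Integrable.mono' ((hu2.const_mul 2).add (hv2.const_mul 2))
      ((hcD.pow 2).aestronglyMeasurable.restrict) (Filter.Eventually.of_forall fun x => ?_)
    simp only [Pi.add_apply]
    rw [Real.norm_eq_abs, abs_of_nonneg (sq_nonneg _)]
    nlinarith [sq_nonneg (u x + v x)]
  -- integrability of ‖grad (u-v)‖^2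
  have hGd : IntegrableOn (fun x => ‖gradient (u - v) x‖ ^ 2) 𝒪 := by
    have e : (fun x => ‖gradient (u - v) x‖ ^ 2) = fun x => ‖fderiv ℝ (u - v) x‖ ^ 2 :=
      funext fun x => by rw [hng]
    have egu : (fun x => ‖gradient u x‖ ^ 2) = fun x => ‖fderiv ℝ u x‖ ^ 2 :=
      funext fun x => by rw [hng]
    have egv : (fun x => ‖gradient v x‖ ^ 2) = fun x => ‖fderiv ℝ v x‖ ^ 2 :=
      funext fun x => by rw [hng]
    rw [e]
    have hgu2' : IntegrableOn (fun x => ‖fderiv ℝ u x‖ ^ 2) 𝒪 := egu ▸ hgu2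
    have hgv2' : IntegrableOn (fun x => ‖fderiv ℝ v x‖ ^ 2) 𝒪 := egv ▸ hgv2
    refine Integrable.mono' ((hgu2'.const_mul 2).add (hgv2'.const_mul 2))
      (((measurable_fderiv ℝ (u - v)).norm.pow_const 2).aestronglyMeasurable.restrict)
      (Filter.Eventually.of_forall fun x => ?_)
    simp only [Pi.add_apply]
    rw [Real.norm_eq_abs, abs_of_nonneg (sq_nonneg _), hfd]
    have h1 : ‖fderiv ℝ u x - fderiv ℝ v x‖ ≤ ‖fderiv ℝ u x‖ + ‖fderiv ℝ v x‖ :=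
      norm_sub_le _ _
    have h2 := mul_self_le_mul_self (norm_nonneg (fderiv ℝ u x - fderiv ℝ v x)) h1
    have h3 := sq_nonneg (‖fderiv ℝ u x‖ - ‖fderiv ℝ v x‖)
    nlinarith [h2, h3]
  -- |u - v| ≤ 2 max
  have habs_le : ∀ x : EuclideanSpace ℝ (Fin d), |u x - v x| ≤ 2 * max |u x| |v x| := by
    intro x
    have h1 : |u x - v x| ≤ |u x| + |v x| := abs_sub _ _
    have h2 := le_max_left |u x| |v x|
    have h3 := le_max_right |u x| |v x|
    linarith
  -- integrability of |u-v|^p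
  have hDp : IntegrableOn (fun x => |u x - v x| ^ p) 𝒪 := by
    refine Integrable.mono' ((hup.add hvp).const_mul ((2:ℝ) ^ p))
      ((hcD.abs.rpow_const fun x => Or.inr hp0).aestronglyMeasurable.restrict)
      (Filter.Eventually.of_forall fun x => ?_)
    simp only [Pi.add_apply]
    rw [Real.norm_eq_abs, abs_of_nonneg (Real.rpow_nonneg (abs_nonneg _) _)]
    have h2 : |u x - v x| ^ p ≤ (2 * max |u x| |v x|) ^ p :=
      Real.rpow_le_rpow (abs_nonneg _) (habs_le x) hp0
    have h3 : ((2:ℝ) * max |u x| |v x|) ^ p = 2 ^ p * max |u x| |v x| ^ p :=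
      Real.mul_rpow (by norm_num) (le_max_of_le_left (abs_nonneg _))
    have h4 : max |u x| |v x| ^ p ≤ |u x| ^ p + |v x| ^ p := by
      rcases max_choice |u x| |v x| with h | h <;> rw [h]
      · exact le_add_of_nonneg_right (Real.rpow_nonneg (abs_nonneg _) _)
      · exact le_add_of_nonneg_left (Real.rpow_nonneg (abs_nonneg _) _)
    have h5 : (0:ℝ) ≤ (2:ℝ) ^ p := Real.rpow_nonneg (by norm_num) _
    calc |u x - v x| ^ p ≤ 2 ^ p * max |u x| |v x| ^ p := by rw [← h3]; exact h2
      _ ≤ 2 ^ p * (|u x| ^ p + |v x| ^ p) := mul_le_mul_of_nonneg_left h4 h5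
  -- conversion of squares to rpow
  have sqrpow : ∀ z : ℝ, z ^ 2 = |z| ^ (2:ℝ) := by
    intro z
    rw [show ((2:ℝ)) = ((2:ℕ):ℝ) by norm_num, Real.rpow_natCast, sq_abs]
  -- integrability of |u|^(p-2) * D^2 etc.
  have hQu : IntegrableOn (fun x => |u x| ^ (p - 2) * (u x - v x) ^ 2) 𝒪 := by
    refine Integrable.mono' (hup.add hDp)
      (((hcu.abs.rpow_const fun x => Or.inr (by linarith)).mul
        (hcD.pow 2)).aestronglyMeasurable.restrict)
      (Filter.Eventually.of_forall fun x => ?_)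
    simp only [Pi.add_apply]
    rw [Real.norm_eq_abs,
      abs_of_nonneg (mul_nonneg (Real.rpow_nonneg (abs_nonneg _) _) (sq_nonneg _)),
      sqrpow (u x - v x)]
    have := rpow_mul_rpow_le (abs_nonneg (u x)) (abs_nonneg (u x - v x))
      (by linarith : (0:ℝ) ≤ p - 2) (by norm_num : (0:ℝ) ≤ 2) (by linarith)
    rw [sub_add_cancel] at this
    exact this
  have hQv : IntegrableOn (fun x => |v x| ^ (p - 2) * (u x - v x) ^ 2) 𝒪 := by
    refine Integrable.mono' (hvp.add hDp)
      (((hcv.abs.rpow_const fun x => Or.inr (by linarith)).mul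
        (hcD.pow 2)).aestronglyMeasurable.restrict)
      (Filter.Eventually.of_forall fun x => ?_)
    simp only [Pi.add_apply]
    rw [Real.norm_eq_abs,
      abs_of_nonneg (mul_nonneg (Real.rpow_nonneg (abs_nonneg _) _) (sq_nonneg _)),
      sqrpow (u x - v x)]
    have := rpow_mul_rpow_le (abs_nonneg (v x)) (abs_nonneg (u x - v x))
      (by linarith : (0:ℝ) ≤ p - 2) (by norm_num : (0:ℝ) ≤ 2) (by linarith)
    rw [sub_add_cancel] at this
    exact this
  -- integrability of |u|^(p-1) * |D|
  have hPD : IntegrableOn (fun x => |u x| ^ (p - 1) * |u x - v x|) 𝒪 := by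
    refine Integrable.mono' (hup.add hDp)
      (((hcu.abs.rpow_const fun x => Or.inr (by linarith)).mul
        hcD.abs).aestronglyMeasurable.restrict)
      (Filter.Eventually.of_forall fun x => ?_)
    simp only [Pi.add_apply]
    rw [Real.norm_eq_abs,
      abs_of_nonneg (mul_nonneg (Real.rpow_nonneg (abs_nonneg _) _) (abs_nonneg _))]
    have := rpow_mul_rpow_le (abs_nonneg (u x)) (abs_nonneg (u x - v x))
      (by linarith : (0:ℝ) ≤ p - 1) (by norm_num : (0:ℝ) ≤ 1) (by linarith)
    rw [sub_add_cancel, Real.rpow_one] at this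
    exact this
  have hPDv : IntegrableOn (fun x => |v x| ^ (p - 1) * |u x - v x|) 𝒪 := by
    refine Integrable.mono' (hvp.add hDp)
      (((hcv.abs.rpow_const fun x => Or.inr (by linarith)).mul
        hcD.abs).aestronglyMeasurable.restrict)
      (Filter.Eventually.of_forall fun x => ?_)
    simp only [Pi.add_apply]
    rw [Real.norm_eq_abs,
      abs_of_nonneg (mul_nonneg (Real.rpow_nonneg (abs_nonneg _) _) (abs_nonneg _))]
    have := rpow_mul_rpow_le (abs_nonneg (v x)) (abs_nonneg (u x - v x))
      (by linarith : (0:ℝ) ≤ p - 1) (by norm_num : (0:ℝ) ≤ 1) (by linarith)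
    rw [sub_add_cancel, Real.rpow_one] at this
    exact this
  -- E bound
  have hEbound : |(∫ x in 𝒪, ‖gradient u x‖ ^ 2) - ∫ x in 𝒪, ‖gradient v x‖ ^ 2| ≤
      Real.sqrt (∫ x in 𝒪, ‖gradient (u - v) x‖ ^ 2) *
        (Real.sqrt (∫ x in 𝒪, ‖gradient u x‖ ^ 2) +
          Real.sqrt (∫ x in 𝒪, ‖gradient v x‖ ^ 2)) :=
    diff_sq_bound hm_gu hm_gv hm_gD (fun x => norm_nonneg _) (fun x => norm_nonneg _)
      (fun x => norm_nonneg _) hgu2 hgv2 hGd htri_g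
  -- N bound
  have eu2 : (fun x : EuclideanSpace ℝ (Fin d) => |u x| ^ 2) = fun x => u x ^ 2 :=
    funext fun x => sq_abs _
  have ev2 : (fun x : EuclideanSpace ℝ (Fin d) => |v x| ^ 2) = fun x => v x ^ 2 :=
    funext fun x => sq_abs _
  have eD2 : (fun x : EuclideanSpace ℝ (Fin d) => |u x - v x| ^ 2) =
      fun x => (u x - v x) ^ 2 := funext fun x => sq_abs _
  have hNbound : |(∫ x in 𝒪, u x ^ 2) - ∫ x in 𝒪, v x ^ 2| ≤
      Real.sqrt (∫ x in 𝒪, (u x - v x) ^ 2) *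
        (Real.sqrt (∫ x in 𝒪, u x ^ 2) + Real.sqrt (∫ x in 𝒪, v x ^ 2)) := by
    have h := diff_sq_bound (μ := volume.restrict 𝒪)
      (f := fun x => |u x|) (g := fun x => |v x|) (h := fun x => |u x - v x|)
      hcu.abs.aestronglyMeasurable.restrict hcv.abs.aestronglyMeasurable.restrict
      hcD.abs.aestronglyMeasurable.restrict
      (fun x => abs_nonneg _) (fun x => abs_nonneg _) (fun x => abs_nonneg _)
      (eu2 ▸ hu2) (ev2 ▸ hv2) (eD2 ▸ hD2)
      (fun x => abs_abs_sub_abs_le_abs_sub (u x) (v x))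
    rw [eu2, ev2, eD2] at h
    exact h
  -- P bound
  have hPu_holder : ∫ x in 𝒪, |u x| ^ (p - 1) * |u x - v x| ≤
      Real.sqrt (∫ x in 𝒪, |u x| ^ (p - 2) * (u x - v x) ^ 2) *
        Real.sqrt (∫ x in 𝒪, |u x| ^ p) :=
    holder_pow hp hcu hcD hup hQu
  have hPv_holder : ∫ x in 𝒪, |v x| ^ (p - 1) * |u x - v x| ≤
      Real.sqrt (∫ x in 𝒪, |v x| ^ (p - 2) * (u x - v x) ^ 2) *
        Real.sqrt (∫ x in 𝒪, |v x| ^ p) :=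
    holder_pow hp hcv hcD hvp hQv
  have hPbound : |(∫ x in 𝒪, |u x| ^ p) - ∫ x in 𝒪, |v x| ^ p| ≤
      p * (Real.sqrt (∫ x in 𝒪, |u x| ^ (p - 2) * (u x - v x) ^ 2) *
            Real.sqrt (∫ x in 𝒪, |u x| ^ p) +
          Real.sqrt (∫ x in 𝒪, |v x| ^ (p - 2) * (u x - v x) ^ 2) *
            Real.sqrt (∫ x in 𝒪, |v x| ^ p)) := by
    have hmono : ∫ x in 𝒪, (|u x| ^ p - |v x| ^ p) ≤
        ∫ x in 𝒪, p * (|u x| ^ (p - 1) * |u x - v x| + |v x| ^ (p - 1) * |u x - v x|) := by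
      apply integral_mono (hup.sub hvp) ((hPD.add hPDv).const_mul p)
      intro x
      simp only [Pi.add_apply, Pi.sub_apply]
      have h1 := (le_abs_self _).trans (pw_pow_diff (x := u x) (y := v x) hp)
      linarith only [h1]
    have hmono2 : ∫ x in 𝒪, (|v x| ^ p - |u x| ^ p) ≤
        ∫ x in 𝒪, p * (|u x| ^ (p - 1) * |u x - v x| + |v x| ^ (p - 1) * |u x - v x|) := by
      apply integral_mono (hvp.sub hup) ((hPD.add hPDv).const_mul p)
      intro x
      simp only [Pi.add_apply, Pi.sub_apply]
      have h2 := pw_pow_diff (x := u x) (y := v x) hp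
      have h3 : -(|u x| ^ p - |v x| ^ p) ≤ |(|u x| ^ p - |v x| ^ p)| := neg_le_abs _
      linarith only [h2, h3]
    rw [integral_sub hup hvp] at hmono
    rw [integral_sub hvp hup] at hmono2
    rw [integral_const_mul, integral_add hPD hPDv] at hmono hmono2
    have hfin := mul_le_mul_of_nonneg_left (add_le_add hPu_holder hPv_holder) hp0
    rw [abs_le]
    constructor
    · linarith only [hmono2, hfin]
    · linarith only [hmono, hfin]
  -- nonnegativity of integrals
  have hEu0 : 0 ≤ ∫ x in 𝒪, ‖gradient u x‖ ^ 2 := integral_nonneg fun x => sq_nonneg _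
  have hEv0 : 0 ≤ ∫ x in 𝒪, ‖gradient v x‖ ^ 2 := integral_nonneg fun x => sq_nonneg _
  have hPu0 : 0 ≤ ∫ x in 𝒪, |u x| ^ p :=
    integral_nonneg fun x => Real.rpow_nonneg (abs_nonneg _) _
  have hPv0 : 0 ≤ ∫ x in 𝒪, |v x| ^ p :=
    integral_nonneg fun x => Real.rpow_nonneg (abs_nonneg _) _
  have hNu0 : 0 ≤ ∫ x in 𝒪, u x ^ 2 := integral_nonneg fun x => sq_nonneg _
  have hNv0 : 0 ≤ ∫ x in 𝒪, v x ^ 2 := integral_nonneg fun x => sq_nonneg _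
  have hND0 : 0 ≤ ∫ x in 𝒪, (u x - v x) ^ 2 := integral_nonneg fun x => sq_nonneg _
  have hGd0 : 0 ≤ ∫ x in 𝒪, ‖gradient (u - v) x‖ ^ 2 := integral_nonneg fun x => sq_nonneg _
  have hQu0 : 0 ≤ ∫ x in 𝒪, |u x| ^ (p - 2) * (u x - v x) ^ 2 :=
    integral_nonneg fun x => mul_nonneg (Real.rpow_nonneg (abs_nonneg _) _) (sq_nonneg _)
  have hQv0 : 0 ≤ ∫ x in 𝒪, |v x| ^ (p - 2) * (u x - v x) ^ 2 :=
    integral_nonneg fun x => mul_nonneg (Real.rpow_nonneg (abs_nonneg _) _) (sq_nonneg _)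
  -- cutoff facts
  have hsu0 : 0 ≤ (∫ x in 𝒪, ‖gradient u x‖ ^ 2) + ∫ x in 𝒪, |u x| ^ p :=
    add_nonneg hEu0 hPu0
  have hsv0 : 0 ≤ (∫ x in 𝒪, ‖gradient v x‖ ^ 2) + ∫ x in 𝒪, |v x| ^ p :=
    add_nonneg hEv0 hPv0
  have ha_def : cutoffCoeff 𝒪 p K u =
      if (∫ x in 𝒪, ‖gradient u x‖ ^ 2) + ∫ x in 𝒪, |u x| ^ p ≤ K then
        (∫ x in 𝒪, ‖gradient u x‖ ^ 2) + ∫ x in 𝒪, |u x| ^ p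
      else K ^ 2 / ((∫ x in 𝒪, ‖gradient u x‖ ^ 2) + ∫ x in 𝒪, |u x| ^ p) := rfl
  have hb_def : cutoffCoeff 𝒪 p K v =
      if (∫ x in 𝒪, ‖gradient v x‖ ^ 2) + ∫ x in 𝒪, |v x| ^ p ≤ K then
        (∫ x in 𝒪, ‖gradient v x‖ ^ 2) + ∫ x in 𝒪, |v x| ^ p
      else K ^ 2 / ((∫ x in 𝒪, ‖gradient v x‖ ^ 2) + ∫ x in 𝒪, |v x| ^ p) := rfl
  have ha0 : 0 ≤ cutoffCoeff 𝒪 p K u := by rw [ha_def]; exact gK_nonneg hK hsu0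
  have haK : cutoffCoeff 𝒪 p K u ≤ K := by rw [ha_def]; exact gK_le hK hsu0
  have hb0 : 0 ≤ cutoffCoeff 𝒪 p K v := by rw [hb_def]; exact gK_nonneg hK hsv0
  have hbK : cutoffCoeff 𝒪 p K v ≤ K := by rw [hb_def]; exact gK_le hK hsv0
  have hab : |cutoffCoeff 𝒪 p K u - cutoffCoeff 𝒪 p K v| *
      (max ((∫ x in 𝒪, ‖gradient u x‖ ^ 2) + ∫ x in 𝒪, |u x| ^ p) K *
        max ((∫ x in 𝒪, ‖gradient v x‖ ^ 2) + ∫ x in 𝒪, |v x| ^ p) K) ≤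
      K ^ 2 * |((∫ x in 𝒪, ‖gradient u x‖ ^ 2) + ∫ x in 𝒪, |u x| ^ p) -
        ((∫ x in 𝒪, ‖gradient v x‖ ^ 2) + ∫ x in 𝒪, |v x| ^ p)| := by
    rw [ha_def, hb_def]
    exact gK_lip hK hsu0 hsv0
  -- Poincaré
  have hPoiu := hPoincare u (Or.inl rfl)
  have hPoiv := hPoincare v (Or.inr (Or.inl rfl))
  -- integral identities
  have i3 : IntegrableOn (fun x => u x ^ 2 / 2) 𝒪 := hu2.div_const 2
  have i4 : IntegrableOn (fun x => v x ^ 2 / 2) 𝒪 := hv2.div_const 2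
  have i2 : IntegrableOn (fun x => (u x - v x) ^ 2 / 2) 𝒪 := hD2.div_const 2
  have i1 : IntegrableOn (fun x => u x ^ 2 / 2 - v x ^ 2 / 2) 𝒪 := i3.sub i4
  have hIu : ∫ x in 𝒪, u x * (u x - v x) =
      ((∫ x in 𝒪, u x ^ 2) - (∫ x in 𝒪, v x ^ 2) + ∫ x in 𝒪, (u x - v x) ^ 2) / 2 := by
    rw [show (fun x => u x * (u x - v x)) =
        fun x => (u x ^ 2 / 2 - v x ^ 2 / 2) + (u x - v x) ^ 2 / 2 from
      funext fun x => by ring]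
    rw [integral_add i1 i2, integral_sub i3 i4,
      integral_div, integral_div, integral_div]
    ring
  have hIv : ∫ x in 𝒪, v x * (u x - v x) =
      ((∫ x in 𝒪, u x ^ 2) - (∫ x in 𝒪, v x ^ 2) - ∫ x in 𝒪, (u x - v x) ^ 2) / 2 := by
    rw [show (fun x => v x * (u x - v x)) =
        fun x => (u x ^ 2 / 2 - v x ^ 2 / 2) - (u x - v x) ^ 2 / 2 from
      funext fun x => by ring]
    rw [integral_sub i1 i2, integral_sub i3 i4,
      integral_div, integral_div, integral_div]
    ring
  -- final assembly
  have key := final_algebra hK hlam hp hEu0 hEv0 hPu0 hPv0 hND0 hGd0 hQu0 hQv0 hNu0 hNv0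
    ha0 haK hb0 hbK hab hEbound hPbound hNbound hPoiu hPoiv
  rw [hIu, hIv]
  linarith only [key]
end

section
/- Let E be a real inner product space and let A : E → E be a linear map. Then for every μ > 0 and all y, u ∈ E satisfying μ y + A y = μ u, one has ⟨A(A y), A y⟩ ≤ (μ/4) ‖A u‖². -/
theorem stmt_8 {E : Type*} [NormedAddCommGroup E] [InnerProductSpace ℝ E]
    (A : E →ₗ[ℝ] E)
    (μ : ℝ) (hμ : 0 < μ) (y u : E) (h : μ • y + A y = μ • u) :
    (inner ℝ (A (A y)) (A y) : ℝ) ≤ (μ / 4) * ‖A u‖ ^ 2 := by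
  set z := A y with hzdef
  have hz : μ • z + A z = μ • A u := by
    have := congrArg A h
    simpa [map_add, map_smul] using this
  have h1 : ‖μ • z + A z‖ ^ 2
      = μ ^ 2 * ‖z‖ ^ 2 + 2 * (μ * (inner ℝ z (A z) : ℝ)) + ‖A z‖ ^ 2 := by
    rw [@norm_add_sq_real, norm_smul, real_inner_smul_left]
    simp [abs_of_pos hμ]
    ring
  have h3 : ‖μ • z - A z‖ ^ 2
      = μ ^ 2 * ‖z‖ ^ 2 - 2 * (μ * (inner ℝ z (A z) : ℝ)) + ‖A z‖ ^ 2 := by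
    rw [@norm_sub_sq_real, norm_smul, real_inner_smul_left]
    simp [abs_of_pos hμ]
    ring
  have h2 : (0:ℝ) ≤ ‖μ • z - A z‖ ^ 2 := sq_nonneg _
  have h4 : ‖μ • A u‖ ^ 2 = μ ^ 2 * ‖A u‖ ^ 2 := by
    rw [norm_smul]
    simp [abs_of_pos hμ]
    ring
  rw [hz, h4] at h1
  have hinner : (inner ℝ (A (A y)) (A y) : ℝ) = inner ℝ z (A z) :=
    real_inner_comm _ _
  rw [hinner]
  nlinarith [h1, h2, h3, hμ]
end

section
/- Let d ≥ 1, let 𝒪 ⊆ ℝ^d be an open set, let p ≥ 2 and K > 0 and λ₁ > 0 be real numbers. Let u, v : 𝒪 → ℝ be differentiable functions such that u, v, ∇u and ∇v are square-integrable on 𝒪 and |u|^p and |v|^p are integrable on 𝒪, and suppose that the Poincaré inequality λ₁ ∫_𝒪 w(x)² dx ≤ ∫_𝒪 |∇w(x)|² dx holds for w = u, w = v and w = u − v. Then ∫_𝒪 |∇(u − v)(x)|² dx + ∫_𝒪 (|u(x)|^{p−2}u(x) − |v(x)|^{p−2}v(x))(u(x) − v(x)) dx − ( c_K(u) ∫_𝒪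 u(x)(u(x) − v(x)) dx − c_K(v) ∫_𝒪 v(x)(u(x) − v(x)) dx ) ≥ −C(K) ∫_𝒪 (u(x) − v(x))² dx, where C(K) = [1 + (2 + p² · 2^{2p−3}) K λ₁^{−1}] K. Equivalently, for every Γ ≥ C(K), adding Γ ∫_𝒪 (u − v)² dx to the left-hand side gives a nonnegative quantity. -/
open MeasureTheory

section Helpers

open Real

private lemma cs_int {X : Type*} [MeasurableSpace X] {μ : Measure X} {f g : X → ℝ}
    (hf2 : Integrable (fun x => f x ^ 2) μ) (hg2 : Integrable (fun x => g x ^ 2) μ)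
    (hfg : Integrable (fun x => f x * g x) μ) :
    ∫ x, f x * g x ∂μ ≤ Real.sqrt (∫ x, f x ^ 2 ∂μ) * Real.sqrt (∫ x, g x ^ 2 ∂μ) := by
  set I := ∫ x, f x * g x ∂μ with hI
  set F := ∫ x, f x ^ 2 ∂μ with hF
  set G := ∫ x, g x ^ 2 ∂μ with hG
  have hF0 : 0 ≤ F := integral_nonneg fun x => sq_nonneg _
  have hG0 : 0 ≤ G := integral_nonneg fun x => sq_nonneg _
  have ht : ∀ t : ℝ, 2 * I * t ≤ t ^ 2 * F + G := by
    intro t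
    have e1 : ∫ x, 2 * (f x * g x) * t ∂μ = 2 * I * t := by
      rw [integral_mul_const, integral_const_mul]
    have e2 : ∫ x, (t ^ 2 * f x ^ 2 + g x ^ 2) ∂μ = t ^ 2 * F + G := by
      rw [integral_add (hf2.const_mul _) hg2, integral_const_mul]
    rw [← e1, ← e2]
    refine integral_mono ((hfg.const_mul 2).mul_const t)
      ((hf2.const_mul _).add hg2) fun x => ?_
    simp only
    nlinarith [sq_nonneg (t * f x - g x)]
  rcases le_or_gt I 0 with h | hI0
  · exact h.trans (by positivity)
  rw [← Real.sqrt_mul hF0]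
  rw [Real.le_sqrt hI0.le (by positivity)]
  have hFpos : 0 < F := by
    rcases hF0.eq_or_lt with h' | h'
    · exfalso
      have h3 := ht ((G + 1) / (2 * I))
      rw [mul_div_cancel₀ _ (by positivity : (2:ℝ) * I ≠ 0)] at h3
      rw [← h'] at h3
      simp only [mul_zero] at h3
      linarith
    · exact h'
  have h3 := ht (I / F)
  have e3 : 2 * I * (I / F) = 2 * (I ^ 2 / F) := by field_simp
  have e4 : (I / F) ^ 2 * F = I ^ 2 / F := by field_simp
  rw [e3, e4] at h3
  have h5 : I ^ 2 / F ≤ G := by linarith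
  have := (div_le_iff₀ hFpos).mp h5
  linarith [this]

private lemma cutoff_bounds {K s : ℝ} (hK : 0 < K) (hs : 0 ≤ s) :
    0 ≤ (if s ≤ K then s else K ^ 2 / s) ∧ (if s ≤ K then s else K ^ 2 / s) ≤ K := by
  split_ifs with h
  · exact ⟨hs, h⟩
  · push_neg at h
    have hs0 : 0 < s := hK.trans h
    constructor
    · positivity
    · rw [div_le_iff₀ hs0]; nlinarith

private lemma cutoff_lip_aux {K s t : ℝ} (hK : 0 < K) (hs : 0 ≤ s) (hst : s ≤ t) :
    |(if s ≤ K then s else K ^ 2 / s) - (if t ≤ K then t else K ^ 2 / t)| * max (max s t) K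
      ≤ K * |s - t| := by
  have ht0 : 0 ≤ t := hs.trans hst
  rw [max_eq_right hst]
  rw [abs_of_nonpos (by linarith : s - t ≤ 0)]
  by_cases htK : t ≤ K
  · rw [if_pos (hst.trans htK), if_pos htK, max_eq_right htK,
      abs_of_nonpos (show s - t ≤ 0 by linarith)]
    nlinarith
  · push_neg at htK
    have htpos : 0 < t := hK.trans htK
    rw [if_neg (not_le.mpr htK), max_eq_left htK.le]
    by_cases hsK : s ≤ K
    · rw [if_pos hsK]
      have e1 : |s - K ^ 2 / t| * t = |s * t - K ^ 2| := by
        have e0 : (s - K ^ 2 / t) * t = s * t - K ^ 2 := by field_simp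
        rw [← e0, abs_mul, abs_of_pos htpos]
      rw [e1, abs_le]
      constructor <;> nlinarith
    · push_neg at hsK
      have hspos : 0 < s := hK.trans hsK
      rw [if_neg (not_le.mpr hsK)]
      have e1 : K ^ 2 / s - K ^ 2 / t = K ^ 2 * (t - s) / (s * t) := by
        field_simp
      have hnn : (0:ℝ) ≤ K ^ 2 / s - K ^ 2 / t := by
        rw [e1]
        apply div_nonneg (by nlinarith) (by positivity)
      rw [abs_of_nonneg hnn, e1, div_mul_eq_mul_div, div_le_iff₀ (by positivity)]
      nlinarith [mul_nonneg (mul_nonneg (sub_nonneg.mpr (le_of_lt hsK))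
        (sub_nonneg.mpr hst)) (mul_nonneg hK.le ht0)]

private lemma cutoff_lip {K s t : ℝ} (hK : 0 < K) (hs : 0 ≤ s) (ht : 0 ≤ t) :
    |(if s ≤ K then s else K ^ 2 / s) - (if t ≤ K then t else K ^ 2 / t)| * max (max s t) K
      ≤ K * |s - t| := by
  rcases le_total s t with h | h
  · exact cutoff_lip_aux hK hs h
  · have := cutoff_lip_aux hK ht h
    rw [abs_sub_comm, max_comm s t]
    rwa [abs_sub_comm t s] at this

private lemma pterm_key {p : ℝ} (hp : 2 ≤ p) (a b : ℝ) :
    (2:ℝ) ^ (1 - p) * ((|a| + |b|) ^ (p - 2) * (a - b) ^ 2)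
      ≤ (|a| ^ (p - 2) * a - |b| ^ (p - 2) * b) * (a - b) := by
  set A := |a| ^ (p - 2) with hA
  set B := |b| ^ (p - 2) with hB
  have hA0 : 0 ≤ A := rpow_nonneg (abs_nonneg a) _
  have hB0 : 0 ≤ B := rpow_nonneg (abs_nonneg b) _
  have hp2 : (0:ℝ) ≤ p - 2 := by linarith
  have h1 : 0 ≤ (A - B) * (a ^ 2 - b ^ 2) := by
    rcases le_total |a| |b| with h | h
    · have hAB : A ≤ B := rpow_le_rpow (abs_nonneg a) h hp2
      have hs : a ^ 2 ≤ b ^ 2 := by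
        rw [← sq_abs a, ← sq_abs b]
        exact pow_le_pow_left₀ (abs_nonneg a) h 2
      nlinarith
    · have hAB : B ≤ A := rpow_le_rpow (abs_nonneg b) h hp2
      have hs : b ^ 2 ≤ a ^ 2 := by
        rw [← sq_abs a, ← sq_abs b]
        exact pow_le_pow_left₀ (abs_nonneg b) h 2
      exact mul_nonneg (by linarith) (by linarith)
  have h2 : (1/2) * (A + B) * (a - b) ^ 2 ≤ (A * a - B * b) * (a - b) := by nlinarith
  have h3 : (|a| + |b|) ^ (p - 2) ≤ 2 ^ (p - 2) * (A + B) := by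
    have hm : |a| + |b| ≤ 2 * max |a| |b| := by
      rcases le_total |a| |b| with h | h
      · rw [max_eq_right h]; linarith
      · rw [max_eq_left h]; linarith
    have h4 : (|a| + |b|) ^ (p - 2) ≤ (2 * max |a| |b|) ^ (p - 2) :=
      rpow_le_rpow (by positivity) hm hp2
    have h5 : (2 * max |a| |b|) ^ (p - 2) = 2 ^ (p - 2) * (max |a| |b|) ^ (p - 2) :=
      mul_rpow (by norm_num) (le_max_of_le_left (abs_nonneg a))
    have h6 : (max |a| |b|) ^ (p - 2) ≤ A + B := by
      rcases le_total |a| |b| with h | h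
      · rw [max_eq_right h]; rw [hA, hB]; linarith
      · rw [max_eq_left h]; rw [hA, hB]; linarith
    calc (|a| + |b|) ^ (p - 2) ≤ 2 ^ (p - 2) * (max |a| |b|) ^ (p - 2) := by rw [← h5]; exact h4
      _ ≤ 2 ^ (p - 2) * (A + B) := by
          exact mul_le_mul_of_nonneg_left h6 (by positivity)
  have h7 : (2:ℝ) ^ (1 - p) * (2:ℝ) ^ (p - 2) = 1/2 := by
    rw [← rpow_add (by norm_num : (0:ℝ) < 2)]
    norm_num
  calc (2:ℝ) ^ (1 - p) * ((|a| + |b|) ^ (p - 2) * (a - b) ^ 2)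
      ≤ (2:ℝ) ^ (1 - p) * ((2 ^ (p - 2) * (A + B)) * (a - b) ^ 2) := by
        refine mul_le_mul_of_nonneg_left ?_ (by positivity)
        exact mul_le_mul_of_nonneg_right h3 (sq_nonneg _)
    _ = (1/2) * (A + B) * (a - b) ^ 2 := by rw [← mul_assoc, ← mul_assoc, h7]
    _ ≤ (A * a - B * b) * (a - b) := h2

private lemma rpow_sub_two_mul_sq {w : ℝ} (hw : 0 ≤ w) {p : ℝ} (hp : 2 ≤ p) :
    w ^ (p - 2) * w ^ (2:ℕ) = w ^ p := by
  rcases hw.eq_or_lt with h | h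
  · rw [← h]
    norm_num [Real.zero_rpow (show p ≠ 0 by linarith)]
  · rw [show (w ^ (2:ℕ) : ℝ) = w ^ ((2:ℕ) : ℝ) from (Real.rpow_natCast w 2).symm,
      ← Real.rpow_add h]
    norm_num

private lemma sq_rpow {w : ℝ} (hw : 0 ≤ w) (r : ℝ) : (w ^ r) ^ (2:ℕ) = w ^ (r * 2) := by
  rw [Real.rpow_mul hw, show ((w ^ r) ^ (2:ℕ) : ℝ) = (w ^ r) ^ ((2:ℕ) : ℝ) from
    (Real.rpow_natCast _ 2).symm]
  norm_num

private lemma rpow_halves {w : ℝ} (hw : 0 ≤ w) {p : ℝ} (hp : 2 ≤ p) :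
    w ^ ((p - 2)/2) * w ^ (p/2) = w ^ (p - 1) := by
  rcases hw.eq_or_lt with h | h
  · rw [← h, Real.zero_rpow (show p/2 ≠ 0 by intro h'; nlinarith [h']),
      Real.zero_rpow (show p - 1 ≠ 0 by intro h'; nlinarith [h'])]
    ring
  · rw [← Real.rpow_add h]
    congr 1
    ring

private lemma rpow_diff_le {p : ℝ} (hp : 1 ≤ p) {s t : ℝ} (ht : 0 ≤ t) (hts : t ≤ s) :
    s ^ p - t ^ p ≤ p * s ^ (p - 1) * (s - t) := by
  have hs : 0 ≤ s := ht.trans hts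
  rcases hs.eq_or_lt with h | h
  · have ht0 : t = 0 := le_antisymm (by linarith) ht
    rw [← h, ht0]
    simp [Real.zero_rpow (show p ≠ 0 by linarith)]
  · have hb := one_add_mul_self_le_rpow_one_add (show (-1:ℝ) ≤ t/s - 1 by
      have : 0 ≤ t/s := div_nonneg ht hs
      linarith) hp
    rw [show (1 : ℝ) + (t/s - 1) = t/s by ring, Real.div_rpow ht hs] at hb
    have hsp : (0:ℝ) < s ^ p := Real.rpow_pos_of_pos h p
    have h1 : (1 + p * (t/s - 1)) * s ^ p ≤ t ^ p / s ^ p * s ^ p :=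
      mul_le_mul_of_nonneg_right hb hsp.le
    rw [div_mul_cancel₀ _ hsp.ne'] at h1
    have hsp1 : s ^ p = s ^ (p - 1) * s := by
      rw [← Real.rpow_add_one h.ne' (p - 1)]
      norm_num
    have h2 : (1 + p * (t/s - 1)) * s ^ p = s ^ p + p * s ^ (p-1) * (t - s) := by
      rw [hsp1]
      field_simp
    rw [h2] at h1
    linarith

private lemma abs_rpow_diff {p : ℝ} (hp : 1 ≤ p) (a b : ℝ) :
    |(|a| ^ p - |b| ^ p)| ≤ p * (|a| + |b|) ^ (p - 1) * |a - b| := by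
  have key : ∀ x y : ℝ, |y| ≤ |x| →
      |x| ^ p - |y| ^ p ≤ p * (|x| + |y|) ^ (p - 1) * |x - y| := by
    intro x y hxy
    have h1 : |x| ^ p - |y| ^ p ≤ p * |x| ^ (p - 1) * (|x| - |y|) :=
      rpow_diff_le hp (abs_nonneg y) hxy
    have h2 : |x| ^ (p - 1) ≤ (|x| + |y|) ^ (p - 1) :=
      Real.rpow_le_rpow (abs_nonneg x) (by linarith [abs_nonneg y]) (by linarith)
    have h3 : |x| - |y| ≤ |x - y| := abs_sub_abs_le_abs_sub x y
    calc |x| ^ p - |y| ^ p ≤ p * |x| ^ (p - 1) * (|x| - |y|) := h1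
      _ ≤ p * (|x| + |y|) ^ (p - 1) * |x - y| := by
          apply mul_le_mul
          · exact mul_le_mul_of_nonneg_left h2 (by linarith)
          · exact h3
          · linarith [abs_nonneg x, abs_nonneg y]
          · positivity
  rcases le_total |b| |a| with h | h
  · rw [abs_of_nonneg (by
      have := Real.rpow_le_rpow (abs_nonneg b) h (by linarith : (0:ℝ) ≤ p)
      linarith)]
    exact key a b h
  · rw [abs_of_nonpos (by
      have := Real.rpow_le_rpow (abs_nonneg a) h (by linarith : (0:ℝ) ≤ p)
      linarith)]
    have := key b a h
    rw [abs_sub_comm b a, add_comm |b| |a|] at this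
    linarith

private lemma add_rpow_le_two_rpow {x y : ℝ} (hx : 0 ≤ x) (hy : 0 ≤ y) {p : ℝ} (hp : 1 ≤ p) :
    (x + y) ^ p ≤ 2 ^ (p - 1) * (x ^ p + y ^ p) := by
  have h := NNReal.rpow_add_le_mul_rpow_add_rpow x.toNNReal y.toNNReal hp
  have h2 := NNReal.coe_le_coe.mpr h
  push_cast at h2
  rwa [Real.coe_toNNReal x hx, Real.coe_toNNReal y hy] at h2

private lemma abs_mul_le_sq_add_sq (a b : ℝ) : |a * b| ≤ a ^ 2 + b ^ 2 := by
  rcases abs_cases (a * b) with ⟨h, _⟩ | ⟨h, _⟩ <;> rw [h] <;>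
    nlinarith [sq_nonneg (a - b), sq_nonneg (a + b)]

private lemma pterm_abs_le {p : ℝ} (hp : 2 ≤ p) (a b : ℝ) :
    |(|a| ^ (p-2) * a - |b| ^ (p-2) * b) * (a - b)| ≤ (|a| + |b|) ^ p := by
  have hW0 : (0:ℝ) ≤ |a| + |b| := by positivity
  have h1 : |a| ^ (p-2) ≤ (|a| + |b|) ^ (p-2) :=
    rpow_le_rpow (abs_nonneg a) (by linarith [abs_nonneg b]) (by linarith)
  have h2 : |b| ^ (p-2) ≤ (|a| + |b|) ^ (p-2) :=
    rpow_le_rpow (abs_nonneg b) (by linarith [abs_nonneg a]) (by linarith)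
  have h3 : |(|a| ^ (p-2) * a - |b| ^ (p-2) * b)| ≤ (|a| + |b|) ^ (p-2) * (|a| + |b|) := by
    calc |(|a| ^ (p-2) * a - |b| ^ (p-2) * b)|
        ≤ |(|a| ^ (p-2) * a)| + |(|b| ^ (p-2) * b)| := abs_sub _ _
      _ = |a| ^ (p-2) * |a| + |b| ^ (p-2) * |b| := by
          rw [abs_mul, abs_mul, abs_of_nonneg (rpow_nonneg (abs_nonneg a) _),
            abs_of_nonneg (rpow_nonneg (abs_nonneg b) _)]
      _ ≤ (|a| + |b|) ^ (p-2) * |a| + (|a| + |b|) ^ (p-2) * |b| :=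
          add_le_add (mul_le_mul_of_nonneg_right h1 (abs_nonneg a))
            (mul_le_mul_of_nonneg_right h2 (abs_nonneg b))
      _ = (|a| + |b|) ^ (p-2) * (|a| + |b|) := by ring
  have h4 : |a - b| ≤ |a| + |b| := by
    rw [sub_eq_add_neg]
    exact (abs_add_le a (-b)).trans (by rw [abs_neg])
  calc |(|a| ^ (p-2) * a - |b| ^ (p-2) * b) * (a - b)|
      = |(|a| ^ (p-2) * a - |b| ^ (p-2) * b)| * |a - b| := abs_mul _ _
    _ ≤ ((|a| + |b|) ^ (p-2) * (|a| + |b|)) * (|a| + |b|) := by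
        apply mul_le_mul h3 h4 (abs_nonneg _) (by positivity)
    _ = (|a| + |b|) ^ (p-2) * (|a| + |b|) ^ (2:ℕ) := by ring
    _ = (|a| + |b|) ^ p := rpow_sub_two_mul_sq hW0 hp

end Helpers

set_option maxHeartbeats 1000000 in
theorem stmt_11 (d : ℕ) (hd : 1 ≤ d)
    (𝒪 : Set (EuclideanSpace ℝ (Fin d))) (h𝒪 : IsOpen 𝒪)
    (p K lam : ℝ) (hp : 2 ≤ p) (hK : 0 < K) (hlam : 0 < lam)
    (u v : EuclideanSpace ℝ (Fin d) → ℝ)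
    (hu : Differentiable ℝ u) (hv : Differentiable ℝ v)
    (hu2 : IntegrableOn (fun x => (u x) ^ 2) 𝒪)
    (hv2 : IntegrableOn (fun x => (v x) ^ 2) 𝒪)
    (hgu2 : IntegrableOn (fun x => ‖gradient u x‖ ^ 2) 𝒪)
    (hgv2 : IntegrableOn (fun x => ‖gradient v x‖ ^ 2) 𝒪)
    (hup : IntegrableOn (fun x => |u x| ^ p) 𝒪)
    (hvp : IntegrableOn (fun x => |v x| ^ p) 𝒪)
    (hPoincare : ∀ w : EuclideanSpace ℝ (Fin d) → ℝ,
      w = u ∨ w = v ∨ w = u - v →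
      lam * ∫ x in 𝒪, (w x) ^ 2 ≤ ∫ x in 𝒪, ‖gradient w x‖ ^ 2) :
    (-(((1 + (2 + p ^ 2 * (2 : ℝ) ^ (2 * p - 3)) * K * lam⁻¹) * K)
        * (∫ x in 𝒪, (u x - v x) ^ 2))
      ≤ (∫ x in 𝒪, ‖gradient (u - v) x‖ ^ 2)
        + (∫ x in 𝒪, (|u x| ^ (p - 2) * u x - |v x| ^ (p - 2) * v x) * (u x - v x))
        - (cutoffCoeff 𝒪 p K u * (∫ x in 𝒪, u x * (u x - v x))
            - cutoffCoeff 𝒪 p K v * (∫ x in 𝒪, v x * (u x - v x))))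
    ∧ ∀ Γ : ℝ, ((1 + (2 + p ^ 2 * (2 : ℝ) ^ (2 * p - 3)) * K * lam⁻¹) * K) ≤ Γ →
        0 ≤ (∫ x in 𝒪, ‖gradient (u - v) x‖ ^ 2)
          + (∫ x in 𝒪, (|u x| ^ (p - 2) * u x - |v x| ^ (p - 2) * v x) * (u x - v x))
          - (cutoffCoeff 𝒪 p K u * (∫ x in 𝒪, u x * (u x - v x))
              - cutoffCoeff 𝒪 p K v * (∫ x in 𝒪, v x * (u x - v x)))
          + Γ * (∫ x in 𝒪, (u x - v x) ^ 2) := by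
  classical
  have hp1 : (1:ℝ) ≤ p := by linarith
  have hcu : Continuous u := hu.continuous
  have hcv : Continuous v := hv.continuous
  -- measurability of gradients
  have hmgu : Measurable (gradient u) :=
    ((InnerProductSpace.toDual ℝ
      (EuclideanSpace ℝ (Fin d))).symm.continuous.measurable).comp (measurable_fderiv ℝ u)
  have hmgv : Measurable (gradient v) :=
    ((InnerProductSpace.toDual ℝ
      (EuclideanSpace ℝ (Fin d))).symm.continuous.measurable).comp (measurable_fderiv ℝ v)
  -- gradient of difference
  have hgsub : ∀ x, gradient (u - v) x = gradient u x - gradient v x := by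
    intro x
    have h1 : fderiv ℝ (u - v) x = fderiv ℝ u x - fderiv ℝ v x :=
      fderiv_sub (hu x) (hv x)
    show (InnerProductSpace.toDual ℝ (EuclideanSpace ℝ (Fin d))).symm (fderiv ℝ (u - v) x) = _
    rw [h1, map_sub]
    rfl
  -- abbreviations
  set A := ∫ x in 𝒪, ‖gradient (u - v) x‖ ^ 2 with hA_def
  set Bq := ∫ x in 𝒪, (|u x| ^ (p - 2) * u x - |v x| ^ (p - 2) * v x) * (u x - v x) with hB_def
  set D := ∫ x in 𝒪, (u x - v x) ^ 2 with hD_def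
  set Iu := ∫ x in 𝒪, u x * (u x - v x) with hIu_def
  set Iv := ∫ x in 𝒪, v x * (u x - v x) with hIv_def
  set Eu := ∫ x in 𝒪, ‖gradient u x‖ ^ 2 with hEu_def
  set Ev := ∫ x in 𝒪, ‖gradient v x‖ ^ 2 with hEv_def
  set Pu := ∫ x in 𝒪, |u x| ^ p with hPu_def
  set Pv := ∫ x in 𝒪, |v x| ^ p with hPv_def
  have hcu_eq : cutoffCoeff 𝒪 p K u
      = if Eu + Pu ≤ K then Eu + Pu else K ^ 2 / (Eu + Pu) := by
    rw [hEu_def, hPu_def]; rfl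
  have hcv_eq : cutoffCoeff 𝒪 p K v
      = if Ev + Pv ≤ K then Ev + Pv else K ^ 2 / (Ev + Pv) := by
    rw [hEv_def, hPv_def]; rfl
  -- nonnegativity
  have hEu0 : 0 ≤ Eu := by rw [hEu_def]; exact integral_nonneg fun x => by positivity
  have hEv0 : 0 ≤ Ev := by rw [hEv_def]; exact integral_nonneg fun x => by positivity
  have hPu0 : 0 ≤ Pu := by
    rw [hPu_def]; exact integral_nonneg fun x => Real.rpow_nonneg (abs_nonneg _) _
  have hPv0 : 0 ≤ Pv := by
    rw [hPv_def]; exact integral_nonneg fun x => Real.rpow_nonneg (abs_nonneg _) _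
  have hD0 : 0 ≤ D := by rw [hD_def]; exact integral_nonneg fun x => sq_nonneg _
  have hA_eq : A = ∫ x in 𝒪, ‖gradient u x - gradient v x‖ ^ 2 := by
    rw [hA_def]; exact integral_congr_ae (ae_of_all _ fun x => by simp only [hgsub x])
  have hA0 : 0 ≤ A := by rw [hA_def]; exact integral_nonneg fun x => by positivity
  -- the auxiliary function W
  set W : EuclideanSpace ℝ (Fin d) → ℝ := fun x => |u x| + |v x| with hW_def
  have hWc : Continuous W := hcu.abs.add hcv.abs
  have hW0 : ∀ x, 0 ≤ W x := fun x => by show (0:ℝ) ≤ |u x| + |v x|; positivity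
  -- integrabilities
  have hiD : IntegrableOn (fun x => (u x - v x) ^ 2) 𝒪 := by
    refine ((hu2.const_mul 2).add (hv2.const_mul 2)).mono'
      (((hcu.sub hcv).pow 2).aestronglyMeasurable) (ae_of_all _ fun x => ?_)
    simp only [Pi.add_apply]
    rw [Real.norm_eq_abs, abs_of_nonneg (sq_nonneg _)]
    nlinarith only [sq_nonneg (u x + v x)]
  have hiUuv : IntegrableOn (fun x => u x * (u x - v x)) 𝒪 := by
    refine (hu2.add hiD).mono'
      ((hcu.mul (hcu.sub hcv)).aestronglyMeasurable) (ae_of_all _ fun x => ?_)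
    simp only [Pi.add_apply]
    rw [Real.norm_eq_abs]
    exact abs_mul_le_sq_add_sq _ _
  have hiVuv : IntegrableOn (fun x => v x * (u x - v x)) 𝒪 := by
    refine (hv2.add hiD).mono'
      ((hcv.mul (hcu.sub hcv)).aestronglyMeasurable) (ae_of_all _ fun x => ?_)
    simp only [Pi.add_apply]
    rw [Real.norm_eq_abs]
    exact abs_mul_le_sq_add_sq _ _
  have hiA' : IntegrableOn (fun x => ‖gradient u x - gradient v x‖ ^ 2) 𝒪 := by
    refine ((hgu2.const_mul 2).add (hgv2.const_mul 2)).mono'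
      (((hmgu.sub hmgv).norm.pow_const 2).aestronglyMeasurable) (ae_of_all _ fun x => ?_)
    simp only [Pi.add_apply]
    rw [Real.norm_eq_abs, abs_of_nonneg (by positivity)]
    have h1 : ‖gradient u x - gradient v x‖ ^ 2 ≤ (‖gradient u x‖ + ‖gradient v x‖) ^ 2 :=
      pow_le_pow_left₀ (norm_nonneg _) (norm_sub_le _ _) 2
    nlinarith only [h1, sq_nonneg (‖gradient u x‖ - ‖gradient v x‖)]
  have hiSum2 : IntegrableOn (fun x => (‖gradient u x‖ + ‖gradient v x‖) ^ 2) 𝒪 := by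
    refine ((hgu2.const_mul 2).add (hgv2.const_mul 2)).mono'
      (((hmgu.norm.add hmgv.norm).pow_const 2).aestronglyMeasurable) (ae_of_all _ fun x => ?_)
    simp only [Pi.add_apply]
    rw [Real.norm_eq_abs, abs_of_nonneg (by positivity)]
    nlinarith only [sq_nonneg (‖gradient u x‖ - ‖gradient v x‖), norm_nonneg (gradient u x),
      norm_nonneg (gradient v x)]
  have hiEprod : IntegrableOn
      (fun x => ‖gradient u x - gradient v x‖ * (‖gradient u x‖ + ‖gradient v x‖)) 𝒪 := by
    refine (hiA'.add hiSum2).mono'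
      (((hmgu.sub hmgv).norm.mul (hmgu.norm.add hmgv.norm)).aestronglyMeasurable)
      (ae_of_all _ fun x => ?_)
    simp only [Pi.add_apply]
    rw [Real.norm_eq_abs]
    exact abs_mul_le_sq_add_sq _ _
  have hWne : ∀ x, W x ≠ 0 ∨ (0:ℝ) ≤ p - 2 := fun x => Or.inr (by linarith)
  have hWrc : Continuous (fun x => W x ^ (p - 2)) := hWc.rpow_const fun x => Or.inr (by linarith)
  have hWrc2 : Continuous (fun x => W x ^ ((p - 2)/2)) :=
    hWc.rpow_const fun x => Or.inr (by linarith)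
  have hWrc3 : Continuous (fun x => W x ^ (p/2)) :=
    hWc.rpow_const fun x => Or.inr (by linarith)
  have hWp_le : ∀ x, W x ^ p ≤ 2 ^ (p-1) * |u x| ^ p + 2 ^ (p-1) * |v x| ^ p := by
    intro x
    have h := add_rpow_le_two_rpow (abs_nonneg (u x)) (abs_nonneg (v x)) hp1
    show (|u x| + |v x|) ^ p ≤ _
    linarith only [h]
  have hiWp : IntegrableOn (fun x => W x ^ p) 𝒪 := by
    refine ((hup.const_mul (2 ^ (p-1))).add (hvp.const_mul (2 ^ (p-1)))).mono'
      ((hWc.rpow_const fun x => Or.inr (by linarith)).aestronglyMeasurable)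
      (ae_of_all _ fun x => ?_)
    simp only [Pi.add_apply]
    rw [Real.norm_eq_abs, abs_of_nonneg (Real.rpow_nonneg (hW0 x) _)]
    exact hWp_le x
  have hQptw : ∀ x, W x ^ (p-2) * (u x - v x) ^ 2 ≤ W x ^ p := by
    intro x
    have h1 : (u x - v x) ^ 2 ≤ W x ^ (2:ℕ) := by
      rw [← sq_abs (u x - v x)]
      refine pow_le_pow_left₀ (abs_nonneg _) ?_ 2
      show |u x - v x| ≤ |u x| + |v x|
      rw [sub_eq_add_neg]
      exact (abs_add_le (u x) (-(v x))).trans (by rw [abs_neg])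
    calc W x ^ (p-2) * (u x - v x) ^ 2 ≤ W x ^ (p-2) * W x ^ (2:ℕ) :=
          mul_le_mul_of_nonneg_left h1 (Real.rpow_nonneg (hW0 x) _)
      _ = W x ^ p := rpow_sub_two_mul_sq (hW0 x) hp
  have hiQ : IntegrableOn (fun x => W x ^ (p-2) * (u x - v x) ^ 2) 𝒪 := by
    refine hiWp.mono' ((hWrc.mul ((hcu.sub hcv).pow 2)).aestronglyMeasurable)
      (ae_of_all _ fun x => ?_)
    rw [Real.norm_eq_abs, abs_of_nonneg (mul_nonneg (Real.rpow_nonneg (hW0 x) _) (sq_nonneg _))]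
    exact hQptw x
  set Q := ∫ x in 𝒪, W x ^ (p-2) * (u x - v x) ^ 2 with hQ_def
  have hQ0 : 0 ≤ Q := by
    rw [hQ_def]
    exact integral_nonneg fun x => mul_nonneg (Real.rpow_nonneg (hW0 x) _) (sq_nonneg _)
  have hiB : IntegrableOn
      (fun x => (|u x| ^ (p - 2) * u x - |v x| ^ (p - 2) * v x) * (u x - v x)) 𝒪 := by
    refine hiWp.mono' ?_ (ae_of_all _ fun x => ?_)
    · exact ((((hcu.abs.rpow_const fun x => Or.inr (by linarith)).mul hcu).sub
        ((hcv.abs.rpow_const fun x => Or.inr (by linarith)).mul hcv)).mul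
        (hcu.sub hcv)).aestronglyMeasurable
    · rw [Real.norm_eq_abs]
      exact pterm_abs_le hp (u x) (v x)
  have hB0 : 0 ≤ Bq := by
    rw [hB_def]
    refine integral_nonneg fun x => ?_
    simp only [Pi.zero_apply]
    have h1 := pterm_key hp (u x) (v x)
    have h2 : (0:ℝ) ≤ (2:ℝ) ^ (1-p) * ((|u x| + |v x|) ^ (p-2) * (u x - v x) ^ 2) := by
      positivity
    linarith only [h1, h2]
  -- B ≥ 2^{1-p} Q
  have hQB : (2:ℝ) ^ (1-p) * Q ≤ Bq := by
    rw [hQ_def, hB_def, ← integral_const_mul]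
    refine integral_mono (hiQ.const_mul _) hiB fun x => ?_
    simpa using pterm_key hp (u x) (v x)
  -- Iu - Iv = D
  have hIuv : Iu - Iv = D := by
    rw [hIu_def, hIv_def, hD_def, ← integral_sub hiUuv hiVuv]
    exact integral_congr_ae (ae_of_all _ fun x => by ring)
  -- m and square roots
  set m := max (max (Eu + Pu) (Ev + Pv)) K with hm_def
  have hKm : K ≤ m := le_max_right _ _
  have hm0 : 0 < m := lt_of_lt_of_le hK hKm
  have hSum : Eu + Pu ≤ m := le_max_of_le_left (le_max_left _ _)
  have hSvm : Ev + Pv ≤ m := le_max_of_le_left (le_max_right _ _)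
  set sA := Real.sqrt A with hsA_def
  set sD := Real.sqrt D with hsD_def
  set sQ := Real.sqrt Q with hsQ_def
  set sm := Real.sqrt m with hsm_def
  set slam := Real.sqrt lam⁻¹ with hslam_def
  set s2p := Real.sqrt ((2:ℝ) ^ p) with hs2p_def
  have hsA0 : 0 ≤ sA := Real.sqrt_nonneg _
  have hsD0 : 0 ≤ sD := Real.sqrt_nonneg _
  have hsQ0 : 0 ≤ sQ := Real.sqrt_nonneg _
  have hsm0 : 0 ≤ sm := Real.sqrt_nonneg _
  have hslam0 : 0 ≤ slam := Real.sqrt_nonneg _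
  have hs2p0 : 0 ≤ s2p := Real.sqrt_nonneg _
  have hsA2 : sA ^ 2 = A := Real.sq_sqrt hA0
  have hsD2 : sD ^ 2 = D := Real.sq_sqrt hD0
  have hsQ2 : sQ ^ 2 = Q := Real.sq_sqrt hQ0
  have hsm2 : sm * sm = m := Real.mul_self_sqrt hm0.le
  have hslam2 : slam ^ 2 = lam⁻¹ := Real.sq_sqrt (by positivity)
  have hs2p2 : s2p ^ 2 = (2:ℝ) ^ p := Real.sq_sqrt (by positivity)
  have hsqrt4 : Real.sqrt 4 = 2 := by
    rw [show (4:ℝ) = 2 ^ 2 by norm_num]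
    exact Real.sqrt_sq (by norm_num)
  -- |Eu - Ev| bound
  have habsE : |Eu - Ev| ≤ sA * (2 * sm) := by
    have h1 : Eu - Ev
        = ∫ x in 𝒪, (‖gradient u x‖ ^ 2 - ‖gradient v x‖ ^ 2) := by
      rw [hEu_def, hEv_def, ← integral_sub hgu2 hgv2]
    have h2 : |Eu - Ev| ≤ ∫ x in 𝒪, |‖gradient u x‖ ^ 2 - ‖gradient v x‖ ^ 2| := by
      rw [h1]
      simpa [Real.norm_eq_abs] using norm_integral_le_integral_norm
        (μ := Measure.restrict volume 𝒪)
        (fun x => ‖gradient u x‖ ^ 2 - ‖gradient v x‖ ^ 2)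
    have h3 : (∫ x in 𝒪, |‖gradient u x‖ ^ 2 - ‖gradient v x‖ ^ 2|)
        ≤ ∫ x in 𝒪, ‖gradient u x - gradient v x‖ * (‖gradient u x‖ + ‖gradient v x‖) := by
      refine integral_mono (hgu2.sub hgv2).abs hiEprod fun x => ?_
      simp only
      have h4 := abs_le.mp (abs_norm_sub_norm_le (gradient u x) (gradient v x))
      rw [abs_le]
      constructor <;>
        nlinarith only [h4.1, h4.2, norm_nonneg (gradient u x), norm_nonneg (gradient v x)]
    have h5 := cs_int hiA' hiSum2 hiEprod
    have h6 : (∫ x in 𝒪, (‖gradient u x‖ + ‖gradient v x‖) ^ 2) ≤ 4 * m := by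
      have h7 : (∫ x in 𝒪, (‖gradient u x‖ + ‖gradient v x‖) ^ 2)
          ≤ ∫ x in 𝒪, (2 * ‖gradient u x‖ ^ 2 + 2 * ‖gradient v x‖ ^ 2) := by
        refine integral_mono hiSum2 ((hgu2.const_mul 2).add (hgv2.const_mul 2)) fun x => ?_
        simp only [Pi.add_apply]
        nlinarith only [sq_nonneg (‖gradient u x‖ - ‖gradient v x‖)]
      have h8 : (∫ x in 𝒪, (2 * ‖gradient u x‖ ^ 2 + 2 * ‖gradient v x‖ ^ 2))
          = 2 * Eu + 2 * Ev := by
        rw [integral_add (hgu2.const_mul 2) (hgv2.const_mul 2), integral_const_mul,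
          integral_const_mul, hEu_def, hEv_def]
      linarith only [h7, h8, hSum, hSvm, hPu0, hPv0]
    have h9 : Real.sqrt (∫ x in 𝒪, (‖gradient u x‖ + ‖gradient v x‖) ^ 2) ≤ 2 * sm := by
      calc Real.sqrt (∫ x in 𝒪, (‖gradient u x‖ + ‖gradient v x‖) ^ 2)
          ≤ Real.sqrt (4 * m) := Real.sqrt_le_sqrt h6
        _ = 2 * sm := by rw [Real.sqrt_mul (by norm_num : (0:ℝ) ≤ 4), hsqrt4, hsm_def]
    have h10 : Real.sqrt (∫ x in 𝒪, ‖gradient u x - gradient v x‖ ^ 2) = sA := by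
      rw [hsA_def, hA_eq]
    calc |Eu - Ev| ≤ ∫ x in 𝒪, |‖gradient u x‖ ^ 2 - ‖gradient v x‖ ^ 2| := h2
      _ ≤ ∫ x in 𝒪, ‖gradient u x - gradient v x‖ * (‖gradient u x‖ + ‖gradient v x‖) := h3
      _ ≤ Real.sqrt (∫ x in 𝒪, ‖gradient u x - gradient v x‖ ^ 2)
            * Real.sqrt (∫ x in 𝒪, (‖gradient u x‖ + ‖gradient v x‖) ^ 2) := h5
      _ = sA * Real.sqrt (∫ x in 𝒪, (‖gradient u x‖ + ‖gradient v x‖) ^ 2) := by rw [h10]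
      _ ≤ sA * (2 * sm) := mul_le_mul_of_nonneg_left h9 hsA0
  -- |Pu - Pv| bound
  have habsuvW : ∀ x, |u x - v x| ≤ W x := by
    intro x
    show |u x - v x| ≤ |u x| + |v x|
    rw [sub_eq_add_neg]
    exact (abs_add_le (u x) (-(v x))).trans (by rw [abs_neg])
  have hWp1 : ∀ x, W x ^ (p-1) * W x = W x ^ p := by
    intro x
    rcases (hW0 x).eq_or_lt with h | h
    · rw [← h, mul_zero, Real.zero_rpow (show p ≠ 0 by linarith)]
    · rw [← Real.rpow_add_one h.ne' (p-1)]
      congr 1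
      ring
  have hf2int : Integrable (fun x => (W x ^ ((p-2)/2) * |u x - v x|) ^ 2)
      (Measure.restrict volume 𝒪) := by
    have h1 : (fun x => (W x ^ ((p-2)/2) * |u x - v x|) ^ 2)
        = fun x => W x ^ (p-2) * (u x - v x) ^ 2 := by
      funext x
      rw [mul_pow, sq_rpow (hW0 x), sq_abs, show (p-2)/2*2 = p-2 from by ring]
    rw [h1]
    exact hiQ
  have hg2int : Integrable (fun x => (W x ^ (p/2)) ^ 2) (Measure.restrict volume 𝒪) := by
    have h1 : (fun x => (W x ^ (p/2)) ^ 2) = fun x => W x ^ p := by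
      funext x
      rw [sq_rpow (hW0 x), show p/2*2 = p from by ring]
    rw [h1]
    exact hiWp
  have hfgprod : ∀ x, (W x ^ ((p-2)/2) * |u x - v x|) * (W x ^ (p/2))
      = W x ^ (p-1) * |u x - v x| := by
    intro x
    rw [show (W x ^ ((p-2)/2) * |u x - v x|) * (W x ^ (p/2))
      = (W x ^ ((p-2)/2) * W x ^ (p/2)) * |u x - v x| from by ring,
      rpow_halves (hW0 x) hp]
  have hfgint : Integrable (fun x => (W x ^ ((p-2)/2) * |u x - v x|) * (W x ^ (p/2)))
      (Measure.restrict volume 𝒪) := by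
    refine hiWp.mono' ?_ (ae_of_all _ fun x => ?_)
    · exact (((hWrc2.mul (hcu.sub hcv).abs)).mul hWrc3).aestronglyMeasurable
    · rw [Real.norm_eq_abs, abs_of_nonneg (mul_nonneg
        (mul_nonneg (Real.rpow_nonneg (hW0 x) _) (abs_nonneg _))
        (Real.rpow_nonneg (hW0 x) _)), hfgprod x]
      calc W x ^ (p-1) * |u x - v x| ≤ W x ^ (p-1) * W x :=
            mul_le_mul_of_nonneg_left (habsuvW x) (Real.rpow_nonneg (hW0 x) _)
        _ = W x ^ p := hWp1 x
  have hQint_eq : (∫ x in 𝒪, (W x ^ ((p-2)/2) * |u x - v x|) ^ 2) = Q := by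
    rw [hQ_def]
    refine integral_congr_ae (ae_of_all _ fun x => ?_)
    simp only
    rw [mul_pow, sq_rpow (hW0 x), sq_abs, show (p-2)/2*2 = p-2 from by ring]
  have hWpint_eq : (∫ x in 𝒪, (W x ^ (p/2)) ^ 2) = ∫ x in 𝒪, W x ^ p := by
    refine integral_congr_ae (ae_of_all _ fun x => ?_)
    simp only
    rw [sq_rpow (hW0 x), show p/2*2 = p from by ring]
  have hWpm : (∫ x in 𝒪, W x ^ p) ≤ (2:ℝ) ^ p * m := by
    have h1 : (∫ x in 𝒪, W x ^ p)
        ≤ ∫ x in 𝒪, (2 ^ (p-1) * |u x| ^ p + 2 ^ (p-1) * |v x| ^ p) := by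
      refine integral_mono hiWp ((hup.const_mul _).add (hvp.const_mul _)) fun x => ?_
      simp only [Pi.add_apply]
      exact hWp_le x
    have h2 : (∫ x in 𝒪, (2 ^ (p-1) * |u x| ^ p + 2 ^ (p-1) * |v x| ^ p))
        = 2 ^ (p-1) * Pu + 2 ^ (p-1) * Pv := by
      rw [integral_add (hup.const_mul _) (hvp.const_mul _), integral_const_mul,
        integral_const_mul, hPu_def, hPv_def]
    have h3 : (2:ℝ) ^ (p-1) * 2 = (2:ℝ) ^ p := by
      rw [← Real.rpow_add_one (by norm_num : (2:ℝ) ≠ 0) (p-1)]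
      congr 1
      ring
    have h4 : Pu + Pv ≤ 2 * m := by
      linarith only [hSum, hSvm, hEu0, hEv0]
    have h5 : (0:ℝ) ≤ (2:ℝ) ^ (p-1) := by positivity
    calc (∫ x in 𝒪, W x ^ p) ≤ 2 ^ (p-1) * Pu + 2 ^ (p-1) * Pv := h1.trans_eq h2
      _ = 2 ^ (p-1) * (Pu + Pv) := by ring
      _ ≤ 2 ^ (p-1) * (2 * m) := mul_le_mul_of_nonneg_left h4 h5
      _ = (2 ^ (p-1) * 2) * m := by ring
      _ = (2:ℝ) ^ p * m := by rw [h3]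
  have habsP : |Pu - Pv| ≤ p * (sQ * (s2p * sm)) := by
    have h1 : Pu - Pv = ∫ x in 𝒪, (|u x| ^ p - |v x| ^ p) := by
      rw [hPu_def, hPv_def, ← integral_sub hup hvp]
    have h2 : |Pu - Pv| ≤ ∫ x in 𝒪, |(|u x| ^ p - |v x| ^ p)| := by
      rw [h1]
      simpa [Real.norm_eq_abs] using norm_integral_le_integral_norm
        (μ := Measure.restrict volume 𝒪) (fun x => |u x| ^ p - |v x| ^ p)
    have h3 : (∫ x in 𝒪, |(|u x| ^ p - |v x| ^ p)|)
        ≤ ∫ x in 𝒪, p * ((W x ^ ((p-2)/2) * |u x - v x|) * (W x ^ (p/2))) := by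
      refine integral_mono (hup.sub hvp).abs (hfgint.const_mul p) fun x => ?_
      simp only
      rw [hfgprod x, ← mul_assoc]
      have h := abs_rpow_diff hp1 (u x) (v x)
      calc |(|u x| ^ p - |v x| ^ p)| ≤ p * (|u x| + |v x|) ^ (p - 1) * |u x - v x| := h
        _ = p * W x ^ (p-1) * |u x - v x| := rfl
    have h4 : (∫ x in 𝒪, p * ((W x ^ ((p-2)/2) * |u x - v x|) * (W x ^ (p/2))))
        = p * ∫ x in 𝒪, (W x ^ ((p-2)/2) * |u x - v x|) * (W x ^ (p/2)) :=
      integral_const_mul _ _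
    have h5 := cs_int hf2int hg2int hfgint
    rw [hQint_eq, hWpint_eq] at h5
    have h6 : Real.sqrt (∫ x in 𝒪, W x ^ p) ≤ s2p * sm := by
      calc Real.sqrt (∫ x in 𝒪, W x ^ p) ≤ Real.sqrt ((2:ℝ) ^ p * m) :=
            Real.sqrt_le_sqrt hWpm
        _ = s2p * sm := by rw [Real.sqrt_mul (by positivity), hs2p_def, hsm_def]
    have h7 : Real.sqrt Q = sQ := hsQ_def.symm
    have h8 : (∫ x in 𝒪, (W x ^ ((p-2)/2) * |u x - v x|) * (W x ^ (p/2)))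
        ≤ sQ * (s2p * sm) := by
      rw [← h7]
      calc (∫ x in 𝒪, (W x ^ ((p-2)/2) * |u x - v x|) * (W x ^ (p/2)))
          ≤ Real.sqrt Q * Real.sqrt (∫ x in 𝒪, W x ^ p) := h5
        _ ≤ Real.sqrt Q * (s2p * sm) :=
            mul_le_mul_of_nonneg_left h6 (Real.sqrt_nonneg _)
    calc |Pu - Pv| ≤ ∫ x in 𝒪, |(|u x| ^ p - |v x| ^ p)| := h2
      _ ≤ ∫ x in 𝒪, p * ((W x ^ ((p-2)/2) * |u x - v x|) * (W x ^ (p/2))) := h3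
      _ = p * ∫ x in 𝒪, (W x ^ ((p-2)/2) * |u x - v x|) * (W x ^ (p/2)) := h4
      _ ≤ p * (sQ * (s2p * sm)) := mul_le_mul_of_nonneg_left h8 (by linarith)
  -- |Iv| bound
  have hIvb : |Iv| ≤ slam * sm * sD := by
    have h1 : |Iv| ≤ ∫ x in 𝒪, |v x| * |u x - v x| := by
      rw [hIv_def]
      simpa [Real.norm_eq_abs, abs_mul] using norm_integral_le_integral_norm
        (μ := Measure.restrict volume 𝒪) (fun x => v x * (u x - v x))
    have h2 : (fun x => |v x * (u x - v x)|) = fun x => |v x| * |u x - v x| :=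
      funext fun x => abs_mul _ _
    have hfv2 : Integrable (fun x => |v x| ^ 2) (Measure.restrict volume 𝒪) := by
      have : (fun x => |v x| ^ 2) = fun x => v x ^ 2 := funext fun x => sq_abs _
      rw [this]; exact hv2
    have hfuv2 : Integrable (fun x => |u x - v x| ^ 2) (Measure.restrict volume 𝒪) := by
      have : (fun x => |u x - v x| ^ 2) = fun x => (u x - v x) ^ 2 := funext fun x => sq_abs _
      rw [this]; exact hiD
    have hfvuv : Integrable (fun x => |v x| * |u x - v x|) (Measure.restrict volume 𝒪) := by
      rw [← h2]; exact hiVuv.abs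
    have h3 := cs_int hfv2 hfuv2 hfvuv
    have h4 : (∫ x in 𝒪, |v x| ^ 2) = ∫ x in 𝒪, v x ^ 2 := by
      refine integral_congr_ae (ae_of_all _ fun x => ?_)
      simp [sq_abs]
    have h5 : (∫ x in 𝒪, |u x - v x| ^ 2) = D := by
      rw [hD_def]
      refine integral_congr_ae (ae_of_all _ fun x => ?_)
      simp [sq_abs]
    have hPoinv := hPoincare v (Or.inr (Or.inl rfl))
    rw [← hEv_def] at hPoinv
    have h6 : (∫ x in 𝒪, v x ^ 2) ≤ lam⁻¹ * m := by
      have h7 : (∫ x in 𝒪, v x ^ 2) ≤ lam⁻¹ * Ev := by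
        have h8 : lam * (∫ x in 𝒪, v x ^ 2) ≤ lam * (lam⁻¹ * Ev) := by
          rw [← mul_assoc, mul_inv_cancel₀ hlam.ne', one_mul]
          exact hPoinv
        exact le_of_mul_le_mul_left h8 hlam
      have h9 : Ev ≤ m := by linarith
      calc (∫ x in 𝒪, v x ^ 2) ≤ lam⁻¹ * Ev := h7
        _ ≤ lam⁻¹ * m := mul_le_mul_of_nonneg_left h9 (by positivity)
    have h10 : Real.sqrt (∫ x in 𝒪, |v x| ^ 2) ≤ slam * sm := by
      rw [h4]
      calc Real.sqrt (∫ x in 𝒪, v x ^ 2) ≤ Real.sqrt (lam⁻¹ * m) := Real.sqrt_le_sqrt h6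
        _ = slam * sm := by rw [Real.sqrt_mul (by positivity), hslam_def, hsm_def]
    have h11 : Real.sqrt (∫ x in 𝒪, |u x - v x| ^ 2) = sD := by rw [h5, hsD_def]
    calc |Iv| ≤ ∫ x in 𝒪, |v x| * |u x - v x| := h1
      _ ≤ Real.sqrt (∫ x in 𝒪, |v x| ^ 2) * Real.sqrt (∫ x in 𝒪, |u x - v x| ^ 2) := h3
      _ ≤ (slam * sm) * sD := by
          rw [h11]
          exact mul_le_mul_of_nonneg_right h10 hsD0
      _ = slam * sm * sD := by ring
  -- cutoff facts
  obtain ⟨hcu0, hcuK⟩ := cutoff_bounds hK (show 0 ≤ Eu + Pu by linarith)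
  obtain ⟨hcv0, hcvK⟩ := cutoff_bounds hK (show 0 ≤ Ev + Pv by linarith)
  have hlip := cutoff_lip (s := Eu + Pu) (t := Ev + Pv) hK (by linarith) (by linarith)
  rw [← hm_def] at hlip
  rw [hcu_eq, hcv_eq]
  set cu := if Eu + Pu ≤ K then Eu + Pu else K ^ 2 / (Eu + Pu) with hcu_set
  set cv := if Ev + Pv ≤ K then Ev + Pv else K ^ 2 / (Ev + Pv) with hcv_set
  -- main estimate
  have hT2 : (cu - cv) * Iv ≤ K * slam * (2 * sA + p * (s2p * sQ)) * sD := by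
    have hstep1 : (cu - cv) * Iv ≤ |cu - cv| * |Iv| := by
      rw [← abs_mul]; exact le_abs_self _
    have hstep3 : (|cu - cv| * m) * |Iv| ≤ (K * |Eu + Pu - (Ev + Pv)|) * (slam * sm * sD) :=
      mul_le_mul hlip hIvb (abs_nonneg _) (by positivity)
    have habsSplit : |Eu + Pu - (Ev + Pv)| ≤ |Eu - Ev| + |Pu - Pv| := by
      rw [show Eu + Pu - (Ev + Pv) = (Eu - Ev) + (Pu - Pv) from by ring]
      exact abs_add_le _ _
    have hstep4 : K * |Eu + Pu - (Ev + Pv)|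
        ≤ K * (sA * (2 * sm) + p * (sQ * (s2p * sm))) :=
      mul_le_mul_of_nonneg_left (habsSplit.trans (add_le_add habsE habsP)) hK.le
    have hchain : (cu - cv) * Iv * m ≤ (K * slam * (2 * sA + p * (s2p * sQ)) * sD) * m := by
      calc (cu - cv) * Iv * m ≤ (|cu - cv| * |Iv|) * m :=
            mul_le_mul_of_nonneg_right hstep1 hm0.le
        _ = (|cu - cv| * m) * |Iv| := by ring
        _ ≤ (K * |Eu + Pu - (Ev + Pv)|) * (slam * sm * sD) := hstep3
        _ ≤ (K * (sA * (2 * sm) + p * (sQ * (s2p * sm)))) * (slam * sm * sD) :=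
            mul_le_mul_of_nonneg_right hstep4 (by positivity)
        _ = (K * slam * (2 * sA + p * (s2p * sQ)) * sD) * (sm * sm) := by ring
        _ = (K * slam * (2 * sA + p * (s2p * sQ)) * sD) * m := by rw [hsm2]
    exact le_of_mul_le_mul_right hchain hm0
  have hY1 : 2 * (K * slam * sA * sD) ≤ A + K ^ 2 * lam⁻¹ * D := by
    have e1 : (K * slam * sD) ^ 2 = K ^ 2 * lam⁻¹ * D := by
      rw [mul_pow, mul_pow, hslam2, hsD2]
    nlinarith only [sq_nonneg (sA - K * slam * sD), e1, hsA2]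
  have hY2 : K * slam * (p * (s2p * sQ)) * sD
      ≤ (2:ℝ) ^ (1-p) * Q + p ^ 2 * (2:ℝ) ^ (2*p-3) * (K ^ 2 * lam⁻¹ * D) := by
    have hg0 : (0:ℝ) < (2:ℝ) ^ (1-p) := by positivity
    have e2 : (K * slam * p * s2p * sD) ^ 2 = p ^ 2 * (2:ℝ) ^ p * (K ^ 2 * lam⁻¹ * D) := by
      rw [mul_pow, mul_pow, mul_pow, mul_pow, hslam2, hs2p2, hsD2]
      ring
    have h42 : (4:ℝ) = (2:ℝ) ^ (2:ℝ) := by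
      rw [show ((2:ℝ) ^ (2:ℝ)) = (2:ℝ) ^ ((2:ℕ):ℝ) from by norm_num, Real.rpow_natCast]
      norm_num
    have e3 : (2:ℝ) ^ (1-p) * (2:ℝ) ^ (2*p-3) * 4 = (2:ℝ) ^ p := by
      rw [← Real.rpow_add two_pos, h42, ← Real.rpow_add two_pos]
      congr 1
      ring
    have key : 4 * (2:ℝ) ^ (1-p) * (sQ * (K * slam * p * s2p * sD))
        ≤ 4 * ((2:ℝ) ^ (1-p)) ^ 2 * sQ ^ 2 + (K * slam * p * s2p * sD) ^ 2 := by
      nlinarith only [sq_nonneg (2 * (2:ℝ) ^ (1-p) * sQ - K * slam * p * s2p * sD)]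
    have goalmul : 4 * (2:ℝ) ^ (1-p) * (K * slam * (p * (s2p * sQ)) * sD)
        ≤ 4 * (2:ℝ) ^ (1-p)
          * ((2:ℝ) ^ (1-p) * Q + p ^ 2 * (2:ℝ) ^ (2*p-3) * (K ^ 2 * lam⁻¹ * D)) := by
      have lhs_eq : 4 * (2:ℝ) ^ (1-p) * (K * slam * (p * (s2p * sQ)) * sD)
          = 4 * (2:ℝ) ^ (1-p) * (sQ * (K * slam * p * s2p * sD)) := by ring
      have rhs_eq : 4 * (2:ℝ) ^ (1-p)
            * ((2:ℝ) ^ (1-p) * Q + p ^ 2 * (2:ℝ) ^ (2*p-3) * (K ^ 2 * lam⁻¹ * D))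
          = 4 * ((2:ℝ) ^ (1-p)) ^ 2 * sQ ^ 2 + (K * slam * p * s2p * sD) ^ 2 := by
        rw [← hsQ2, e2]
        linear_combination (p ^ 2 * (K ^ 2 * lam⁻¹ * D)) * e3
      rw [lhs_eq, rhs_eq]
      exact key
    have h4g : (0:ℝ) < 4 * (2:ℝ) ^ (1-p) := by positivity
    calc K * slam * (p * (s2p * sQ)) * sD
        = (4 * (2:ℝ) ^ (1-p))⁻¹ * (4 * (2:ℝ) ^ (1-p) * (K * slam * (p * (s2p * sQ)) * sD)) := by
          field_simp
      _ ≤ (4 * (2:ℝ) ^ (1-p))⁻¹ * (4 * (2:ℝ) ^ (1-p)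
            * ((2:ℝ) ^ (1-p) * Q + p ^ 2 * (2:ℝ) ^ (2*p-3) * (K ^ 2 * lam⁻¹ * D))) :=
          mul_le_mul_of_nonneg_left goalmul (by positivity)
      _ = (2:ℝ) ^ (1-p) * Q + p ^ 2 * (2:ℝ) ^ (2*p-3) * (K ^ 2 * lam⁻¹ * D) := by
          field_simp
  have hcuD : cu * D ≤ K * D := mul_le_mul_of_nonneg_right hcuK hD0
  have hsplit : cu * Iu - cv * Iv = cu * D + (cu - cv) * Iv := by
    rw [← hIuv]; ring
  have hmain : cu * Iu - cv * Iv
      ≤ A + Bq + ((1 + (2 + p ^ 2 * (2:ℝ) ^ (2*p-3)) * K * lam⁻¹) * K) * D := by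
    have hexp : ((1 + (2 + p ^ 2 * (2:ℝ) ^ (2*p-3)) * K * lam⁻¹) * K) * D
        = K * D + 2 * (K ^ 2 * lam⁻¹ * D) + p ^ 2 * (2:ℝ) ^ (2*p-3) * (K ^ 2 * lam⁻¹ * D) := by
      ring
    have hT2' : (cu - cv) * Iv
        ≤ 2 * (K * slam * sA * sD) + K * slam * (p * (s2p * sQ)) * sD :=
      hT2.trans_eq (by ring)
    have hKlD : (0:ℝ) ≤ K ^ 2 * lam⁻¹ * D := by positivity
    linarith only [hY1, hY2, hQB, hcuD, hT2', hsplit, hexp, hKlD]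
  constructor
  · linarith only [hmain]
  · intro Γ hΓ
    have h1 : ((1 + (2 + p ^ 2 * (2:ℝ) ^ (2*p-3)) * K * lam⁻¹) * K) * D ≤ Γ * D :=
      mul_le_mul_of_nonneg_right hΓ hD0
    linarith only [hmain, h1]
end

section
/- Let (X, 𝒜, μ) be a measure space, let p ≥ 2 be a real number, and let u, v : X → ℝ be measurable functions with ∫|u|^p dμ < ∞ and ∫|v|^p dμ < ∞. Then ∫ (|u|^{p−2}u − |v|^{p−2}v)(u − v) dμ ≥ (1/2) ∫ |u|^{p−2}(u − v)² dμ + (1/2) ∫ |v|^{p−2}(u − v)² dμ. -/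
open MeasureTheory

private lemma aux_pow (p : ℝ) (hp : 2 ≤ p) (a : ℝ) (ha : 0 ≤ a) :
    a ^ (p - 2) * a ^ 2 = a ^ p := by
  have h2 : a ^ (2 : ℕ) = a ^ (2 : ℝ) := by
    rw [← Real.rpow_natCast a 2]; norm_num
  rw [h2, ← Real.rpow_add' ha (by linarith : p - 2 + 2 ≠ 0)]
  norm_num

private lemma key_bound (p : ℝ) (hp : 2 ≤ p) (a b : ℝ) (ha : 0 ≤ a) (hb : 0 ≤ b) :
    a ^ (p - 2) * b ^ 2 ≤ a ^ p + b ^ p := by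
  rcases le_total a b with h | h
  · have h1 : a ^ (p - 2) ≤ b ^ (p - 2) := Real.rpow_le_rpow ha h (by linarith)
    have h2 : a ^ (p - 2) * b ^ 2 ≤ b ^ (p - 2) * b ^ 2 :=
      mul_le_mul_of_nonneg_right h1 (sq_nonneg b)
    have := aux_pow p hp b hb
    have hbp : 0 ≤ a ^ p := Real.rpow_nonneg ha p
    linarith
  · have h2 : a ^ (p - 2) * b ^ 2 ≤ a ^ (p - 2) * a ^ 2 := by
      apply mul_le_mul_of_nonneg_left _ (Real.rpow_nonneg ha _)
      nlinarith
    have := aux_pow p hp a ha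
    have hbp : 0 ≤ b ^ p := Real.rpow_nonneg hb p
    linarith

theorem stmt_12 {X : Type*} [MeasurableSpace X] (μ : Measure X)
    (p : ℝ) (hp : 2 ≤ p) (u v : X → ℝ)
    (hu : Measurable u) (hv : Measurable v)
    (hup : Integrable (fun x => |u x| ^ p) μ)
    (hvp : Integrable (fun x => |v x| ^ p) μ) :
    (1 / 2) * (∫ x, |u x| ^ (p - 2) * (u x - v x) ^ 2 ∂μ)
      + (1 / 2) * (∫ x, |v x| ^ (p - 2) * (u x - v x) ^ 2 ∂μ)
    ≤ ∫ x, (|u x| ^ (p - 2) * u x - |v x| ^ (p - 2) * v x) * (u x - v x) ∂μ := by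
  have hdom : Integrable (fun x => 4 * (|u x| ^ p + |v x| ^ p)) μ :=
    (hup.add hvp).const_mul 4
  -- basic pointwise facts
  have key : ∀ x : X,
      |u x| ^ (p - 2) * |v x| ^ 2 ≤ |u x| ^ p + |v x| ^ p := fun x =>
    key_bound p hp _ _ (abs_nonneg _) (abs_nonneg _)
  have key' : ∀ x : X,
      |v x| ^ (p - 2) * |u x| ^ 2 ≤ |v x| ^ p + |u x| ^ p := fun x =>
    key_bound p hp _ _ (abs_nonneg _) (abs_nonneg _)
  have hAa : ∀ x : X, |u x| ^ (p - 2) * |u x| ^ 2 = |u x| ^ p := fun x =>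
    aux_pow p hp _ (abs_nonneg _)
  have hBb : ∀ x : X, |v x| ^ (p - 2) * |v x| ^ 2 = |v x| ^ p := fun x =>
    aux_pow p hp _ (abs_nonneg _)
  -- integrability of the two squared terms
  have hInt1 : Integrable (fun x => |u x| ^ (p - 2) * (u x - v x) ^ 2) μ := by
    apply hdom.mono
    · apply (((hu.abs.pow_const (p-2)).mul ((hu.sub hv).pow_const 2)).aestronglyMeasurable)
    · filter_upwards with x
      simp only [Real.norm_eq_abs]
      have hA0 : (0:ℝ) ≤ |u x| ^ (p - 2) := Real.rpow_nonneg (abs_nonneg _) _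
      have h1 := key x
      have h2 := hAa x
      have hup0 : (0:ℝ) ≤ |u x| ^ p := Real.rpow_nonneg (abs_nonneg _) _
      have hvp0 : (0:ℝ) ≤ |v x| ^ p := Real.rpow_nonneg (abs_nonneg _) _
      rw [abs_of_nonneg (mul_nonneg hA0 (sq_nonneg _)),
        abs_of_nonneg (by positivity : (0:ℝ) ≤ 4 * (|u x| ^ p + |v x| ^ p))]
      have hu2 : u x ^ 2 = |u x| ^ 2 := (sq_abs _).symm
      have hv2 : v x ^ 2 = |v x| ^ 2 := (sq_abs _).symm
      nlinarith [mul_nonneg hA0 (sq_nonneg (u x + v x)), sq_nonneg (u x - v x)]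
  have hInt2 : Integrable (fun x => |v x| ^ (p - 2) * (u x - v x) ^ 2) μ := by
    apply hdom.mono
    · apply (((hv.abs.pow_const (p-2)).mul ((hu.sub hv).pow_const 2)).aestronglyMeasurable)
    · filter_upwards with x
      simp only [Real.norm_eq_abs]
      have hB0 : (0:ℝ) ≤ |v x| ^ (p - 2) := Real.rpow_nonneg (abs_nonneg _) _
      have h1 := key' x
      have h2 := hBb x
      have hup0 : (0:ℝ) ≤ |u x| ^ p := Real.rpow_nonneg (abs_nonneg _) _
      have hvp0 : (0:ℝ) ≤ |v x| ^ p := Real.rpow_nonneg (abs_nonneg _) _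
      rw [abs_of_nonneg (mul_nonneg hB0 (sq_nonneg _)),
        abs_of_nonneg (by positivity : (0:ℝ) ≤ 4 * (|u x| ^ p + |v x| ^ p))]
      have hu2 : u x ^ 2 = |u x| ^ 2 := (sq_abs _).symm
      have hv2 : v x ^ 2 = |v x| ^ 2 := (sq_abs _).symm
      nlinarith [mul_nonneg hB0 (sq_nonneg (u x + v x)), sq_nonneg (u x - v x)]
  -- integrability of the RHS
  have hIntg : Integrable
      (fun x => (|u x| ^ (p - 2) * u x - |v x| ^ (p - 2) * v x) * (u x - v x)) μ := by
    apply hdom.mono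
    · exact (((hu.abs.pow_const (p-2)).mul hu).sub ((hv.abs.pow_const (p-2)).mul hv)).mul
        (hu.sub hv) |>.aestronglyMeasurable
    · filter_upwards with x
      simp only [Real.norm_eq_abs]
      have hA0 : (0:ℝ) ≤ |u x| ^ (p - 2) := Real.rpow_nonneg (abs_nonneg _) _
      have hB0 : (0:ℝ) ≤ |v x| ^ (p - 2) := Real.rpow_nonneg (abs_nonneg _) _
      have h1 := key x
      have h1' := key' x
      have h2 := hAa x
      have h2' := hBb x
      rw [abs_of_nonneg (by positivity : (0:ℝ) ≤ 4 * (|u x| ^ p + |v x| ^ p))]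
      calc |(|u x| ^ (p - 2) * u x - |v x| ^ (p - 2) * v x) * (u x - v x)|
          = |(|u x| ^ (p - 2) * u x - |v x| ^ (p - 2) * v x)| * |u x - v x| := abs_mul _ _
        _ ≤ (|u x| ^ (p - 2) * |u x| + |v x| ^ (p - 2) * |v x|) * (|u x| + |v x|) := by
            refine mul_le_mul ?_ (abs_sub (u x) (v x)) (abs_nonneg _) (by positivity)
            refine (abs_sub (|u x| ^ (p - 2) * u x) (|v x| ^ (p - 2) * v x)).trans ?_
            rw [abs_mul, abs_mul, abs_of_nonneg hA0, abs_of_nonneg hB0]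
        _ ≤ 4 * (|u x| ^ p + |v x| ^ p) := by
            nlinarith [mul_nonneg hA0 (sq_nonneg (|u x| - |v x|)),
              mul_nonneg hB0 (sq_nonneg (|u x| - |v x|)), abs_nonneg (u x),
              abs_nonneg (v x)]
  -- combine integrals
  rw [← integral_const_mul, ← integral_const_mul,
    ← integral_add (hInt1.const_mul _) (hInt2.const_mul _)]
  refine integral_mono_of_nonneg ?_ hIntg ?_
  · filter_upwards with x
    have hA0 : (0:ℝ) ≤ |u x| ^ (p - 2) := Real.rpow_nonneg (abs_nonneg _) _
    have hB0 : (0:ℝ) ≤ |v x| ^ (p - 2) := Real.rpow_nonneg (abs_nonneg _) _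
    simp only [Pi.zero_apply]
    positivity
  · filter_upwards with x
    have hA0 : (0:ℝ) ≤ |u x| ^ (p - 2) := Real.rpow_nonneg (abs_nonneg _) _
    have hB0 : (0:ℝ) ≤ |v x| ^ (p - 2) := Real.rpow_nonneg (abs_nonneg _) _
    have hmono : 0 ≤ (|u x| ^ (p - 2) - |v x| ^ (p - 2)) * (u x ^ 2 - v x ^ 2) := by
      rcases le_total (|u x|) (|v x|) with h | h
      · have hAB : |u x| ^ (p - 2) ≤ |v x| ^ (p - 2) :=
          Real.rpow_le_rpow (abs_nonneg _) h (by linarith)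
        have hsq : u x ^ 2 ≤ v x ^ 2 := by
          nlinarith [sq_abs (u x), sq_abs (v x), abs_nonneg (u x), abs_nonneg (v x)]
        nlinarith [mul_nonneg (sub_nonneg.2 hAB) (sub_nonneg.2 hsq)]
      · have hAB : |v x| ^ (p - 2) ≤ |u x| ^ (p - 2) :=
          Real.rpow_le_rpow (abs_nonneg _) h (by linarith)
        have hsq : v x ^ 2 ≤ u x ^ 2 := by
          nlinarith [sq_abs (u x), sq_abs (v x), abs_nonneg (u x), abs_nonneg (v x)]
        nlinarith [mul_nonneg (sub_nonneg.2 hAB) (sub_nonneg.2 hsq)]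
    nlinarith [hmono]
end

section
/- Let (X, 𝒜, μ) be a measure space, let p ≥ 2 be a real number, and let u, v : X → ℝ be measurable functions with ∫|u|^p dμ < ∞, ∫|v|^p dμ < ∞, ∫u² dμ < ∞ and ∫v² dμ < ∞. Write ‖w‖_{L^p}^p = ∫|w|^p dμ. Then ( ‖u‖_{L^p}^p − ‖v‖_{L^p}^p ) · ∫ v (u − v) dμ ≤ (1/4) ( ∫ |u|^{p−2}(u − v)² dμ + ∫ |v|^{p−2}(u − v)² dμ ) + p² · 2^{2p−4} · ( ‖u‖_{L^p}^p + ‖v‖_{L^p}^p ) · ( ∫ v² dμ ) · ( ∫ (u − v)² dμ ). -/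
open MeasureTheory

private lemma aux_int_mul {X : Type*} [MeasurableSpace X] {μ : Measure X}
    {f g : X → ℝ} (hfm : AEStronglyMeasurable f μ) (hgm : AEStronglyMeasurable g μ)
    (hf2 : Integrable (fun x => f x ^ 2) μ) (hg2 : Integrable (fun x => g x ^ 2) μ) :
    Integrable (fun x => f x * g x) μ := by
  have hb : Integrable (fun x => f x ^ 2 + g x ^ 2) μ := hf2.add hg2
  refine hb.mono' (hfm.mul hgm) (ae_of_all _ fun x => ?_)
  rw [Real.norm_eq_abs, abs_mul]
  nlinarith [sq_nonneg (|f x| - |g x|), abs_nonneg (f x), abs_nonneg (g x),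
    sq_abs (f x), sq_abs (g x)]

private lemma aux_cs {X : Type*} [MeasurableSpace X] (μ : Measure X)
    {f g : X → ℝ} (hf0 : ∀ x, 0 ≤ f x) (hg0 : ∀ x, 0 ≤ g x)
    (hfm : AEStronglyMeasurable f μ) (hgm : AEStronglyMeasurable g μ)
    (hf2 : Integrable (fun x => f x ^ 2) μ) (hg2 : Integrable (fun x => g x ^ 2) μ) :
    ∫ x, f x * g x ∂μ ≤ Real.sqrt (∫ x, f x ^ 2 ∂μ) * Real.sqrt (∫ x, g x ^ 2 ∂μ) := by
  have h2 : (2:ℝ).HolderConjugate 2 := Real.holderConjugate_iff.2 ⟨one_lt_two, by norm_num⟩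
  have he : (ENNReal.ofReal 2) = 2 := by norm_num
  have hfL : MemLp f (ENNReal.ofReal 2) μ := by
    rw [he]; exact (memLp_two_iff_integrable_sq hfm).2 hf2
  have hgL : MemLp g (ENNReal.ofReal 2) μ := by
    rw [he]; exact (memLp_two_iff_integrable_sq hgm).2 hg2
  have := integral_mul_le_Lp_mul_Lq_of_nonneg h2 (ae_of_all _ hf0) (ae_of_all _ hg0) hfL hgL
  have hpow : ∀ y : ℝ, y ^ (2:ℝ) = y ^ (2:ℕ) := fun y => by
    rw [← Real.rpow_natCast y 2]; norm_num
  have hfe : ∫ x, f x ^ (2:ℝ) ∂μ = ∫ x, f x ^ 2 ∂μ :=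
    integral_congr_ae (ae_of_all _ fun x => hpow (f x))
  have hge : ∫ x, g x ^ (2:ℝ) ∂μ = ∫ x, g x ^ 2 ∂μ :=
    integral_congr_ae (ae_of_all _ fun x => hpow (g x))
  rw [hfe, hge] at this
  rw [Real.sqrt_eq_rpow, Real.sqrt_eq_rpow]
  simpa using this

private lemma aux_pow_sub {p : ℝ} (hp : 2 ≤ p) {A B : ℝ} (hB : 0 ≤ B) (hBA : B ≤ A) :
    A ^ p - B ^ p ≤ p * A ^ (p - 1) * (A - B) := by
  have hA : 0 ≤ A := hB.trans hBA
  rcases eq_or_lt_of_le hA with h0 | h0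
  · have hA0 : A = 0 := h0.symm
    have hB0 : B = 0 := le_antisymm (by rw [← hA0]; exact hBA) hB
    simp [hA0, hB0, Real.zero_rpow (by linarith : p ≠ 0)]
  · have hp1 : (1:ℝ) ≤ p := by linarith
    have hs : (-1:ℝ) ≤ B / A - 1 := by
      have : 0 ≤ B / A := div_nonneg hB h0.le
      linarith
    have h1 := one_add_mul_self_le_rpow_one_add hs hp1
    rw [show (1 + (B / A - 1)) = B / A by ring] at h1
    rw [Real.div_rpow hB h0.le p] at h1
    have hApos : (0:ℝ) < A ^ p := Real.rpow_pos_of_pos h0 p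
    have h3 : A ^ p * (1 + p * (B / A - 1)) ≤ B ^ p := by
      have := mul_le_mul_of_nonneg_left h1 hApos.le
      rwa [mul_div_cancel₀ _ hApos.ne'] at this
    have e : A ^ (p - 1) * A = A ^ p := by
      rw [← Real.rpow_add_one h0.ne' (p - 1)]; ring_nf
    have e2 : A ^ p * (B / A) = A ^ (p - 1) * B := by
      rw [← e]; field_simp
    nlinarith [h3, e2, e]

private lemma aux_pw {p : ℝ} (hp : 2 ≤ p) (a b : ℝ) :
    |(|a| ^ p - |b| ^ p)| ≤ p * (max |a| |b|) ^ (p - 1) * |a - b| := by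
  have hnn : 0 ≤ p * (max |a| |b|) ^ (p - 1) :=
    mul_nonneg (by linarith) (Real.rpow_nonneg (le_trans (abs_nonneg a) (le_max_left _ _)) _)
  have key : ∀ s t : ℝ, |t| ≤ |s| →
      |(|s| ^ p - |t| ^ p)| ≤ p * (max |s| |t|) ^ (p - 1) * (|s| - |t|) := by
    intro s t h
    rw [max_eq_left h, abs_of_nonneg
      (sub_nonneg.2 (Real.rpow_le_rpow (abs_nonneg t) h (by linarith)))]
    exact aux_pow_sub hp (abs_nonneg t) h
  rcases le_total |b| |a| with h | h
  · refine (key a b h).trans ?_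
    exact mul_le_mul_of_nonneg_left (abs_sub_abs_le_abs_sub a b) hnn
  · rw [abs_sub_comm (|a| ^ p)]
    refine (key b a h).trans ?_
    rw [max_comm |b| |a|]
    refine mul_le_mul_of_nonneg_left ?_ hnn
    calc |b| - |a| ≤ |b - a| := abs_sub_abs_le_abs_sub b a
      _ = |a - b| := abs_sub_comm b a

set_option maxHeartbeats 1000000 in
theorem stmt_14 {X : Type*} [MeasurableSpace X] (μ : Measure X)
    (p : ℝ) (hp : 2 ≤ p) (u v : X → ℝ)
    (hu : Measurable u) (hv : Measurable v)
    (hup : Integrable (fun x => |u x| ^ p) μ)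
    (hvp : Integrable (fun x => |v x| ^ p) μ)
    (hu2 : Integrable (fun x => (u x) ^ 2) μ)
    (hv2 : Integrable (fun x => (v x) ^ 2) μ) :
    ((∫ x, |u x| ^ p ∂μ) - (∫ x, |v x| ^ p ∂μ)) * (∫ x, v x * (u x - v x) ∂μ)
      ≤ (1 / 4) * ((∫ x, |u x| ^ (p - 2) * (u x - v x) ^ 2 ∂μ)
          + (∫ x, |v x| ^ (p - 2) * (u x - v x) ^ 2 ∂μ))
        + p ^ 2 * (2 : ℝ) ^ (2 * p - 4)
          * ((∫ x, |u x| ^ p ∂μ) + (∫ x, |v x| ^ p ∂μ))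
          * (∫ x, (v x) ^ 2 ∂μ) * (∫ x, (u x - v x) ^ 2 ∂μ) := by
  have hpow : ∀ y : ℝ, y ^ (2:ℝ) = y ^ (2:ℕ) := fun y => by
    rw [← Real.rpow_natCast y 2]; norm_num
  set m : X → ℝ := fun x => max |u x| |v x| with hm_def
  have hm0 : ∀ x, 0 ≤ m x := fun x => le_trans (abs_nonneg _) (le_max_left _ _)
  have hmm : Measurable m := hu.abs.max hv.abs
  have hrm : ∀ q : ℝ, 0 ≤ q → Measurable fun x => m x ^ q := fun q hq =>
    (Real.continuous_rpow_const hq).measurable.comp hmm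
  have hmu : ∀ x, |u x| ≤ m x := fun x => le_max_left _ _
  have hmv : ∀ x, |v x| ≤ m x := fun x => le_max_right _ _
  have hmp_le : ∀ x, m x ^ p ≤ |u x| ^ p + |v x| ^ p := by
    intro x
    rcases max_cases |u x| |v x| with ⟨h1, _⟩ | ⟨h1, _⟩ <;> rw [hm_def] <;> simp only [h1]
    · exact le_add_of_nonneg_right (Real.rpow_nonneg (abs_nonneg _) _)
    · exact le_add_of_nonneg_left (Real.rpow_nonneg (abs_nonneg _) _)
  have hMint : Integrable (fun x => m x ^ p) μ := by
    refine (hup.add hvp).mono' ((hrm p (by linarith)).aestronglyMeasurable)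
      (ae_of_all _ fun x => ?_)
    rw [Real.norm_eq_abs, abs_of_nonneg (Real.rpow_nonneg (hm0 x) _)]
    exact hmp_le x
  have hw2 : Integrable (fun x => (u x - v x) ^ 2) μ := by
    have hb : Integrable (fun x => 2 * (u x ^ 2 + v x ^ 2)) μ := (hu2.add hv2).const_mul 2
    refine hb.mono' (((hu.sub hv).pow_const 2).aestronglyMeasurable)
      (ae_of_all _ fun x => ?_)
    rw [Real.norm_eq_abs, abs_of_nonneg (sq_nonneg _)]
    nlinarith [sq_nonneg (u x + v x)]
  -- the two auxiliary functions for Cauchy-Schwarz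
  set f : X → ℝ := fun x => m x ^ ((p - 2) / 2) * |u x - v x| with hf_def
  set g : X → ℝ := fun x => m x ^ (p / 2) with hg_def
  have hf0 : ∀ x, 0 ≤ f x := fun x => mul_nonneg (Real.rpow_nonneg (hm0 x) _) (abs_nonneg _)
  have hg0 : ∀ x, 0 ≤ g x := fun x => Real.rpow_nonneg (hm0 x) _
  have hfm : Measurable f := (hrm _ (by linarith)).mul (hu.sub hv).abs
  have hgm : Measurable g := hrm _ (by linarith)
  have hfsq : ∀ x, f x ^ 2 = m x ^ (p - 2) * (u x - v x) ^ 2 := by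
    intro x
    rw [hf_def]
    have : (m x ^ ((p - 2) / 2)) ^ 2 = m x ^ (p - 2) := by
      rw [sq, ← Real.rpow_add_of_nonneg (hm0 x) (by linarith) (by linarith)]
      ring_nf
    rw [mul_pow, this, sq_abs]
  have hgsq : ∀ x, g x ^ 2 = m x ^ p := by
    intro x
    rw [hg_def, sq, ← Real.rpow_add_of_nonneg (hm0 x) (by linarith) (by linarith)]
    ring_nf
  have hfg : ∀ x, f x * g x = m x ^ (p - 1) * |u x - v x| := by
    intro x
    rw [hf_def, hg_def, mul_right_comm,
      ← Real.rpow_add_of_nonneg (hm0 x) (by linarith) (by linarith)]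
    ring_nf
  -- pointwise bound (u-v)^2 ≤ 4 m^2
  have hsub : ∀ x, (u x - v x) ^ 2 ≤ 4 * m x ^ (2:ℕ) := by
    intro x
    have h1 : |u x - v x| ≤ |u x| + |v x| := abs_sub (u x) (v x)
    have h2 : |u x| + |v x| ≤ 2 * m x := by
      have := hmu x; have := hmv x; linarith
    nlinarith [abs_nonneg (u x - v x), sq_abs (u x - v x)]
  -- dominating bound : any of these integrands is ≤ 4 * m^p
  have hdom : ∀ (w : X → ℝ), (∀ x, 0 ≤ w x) → (∀ x, w x ≤ m x) →
      ∀ x, w x ^ (p - 2) * (u x - v x) ^ 2 ≤ 4 * m x ^ p := by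
    intro w hw0 hwm x
    have h1 : w x ^ (p - 2) ≤ m x ^ (p - 2) :=
      Real.rpow_le_rpow (hw0 x) (hwm x) (by linarith)
    have h3 : w x ^ (p - 2) * (u x - v x) ^ 2 ≤ m x ^ (p - 2) * (4 * m x ^ (2:ℕ)) :=
      mul_le_mul h1 (hsub x) (sq_nonneg _) (Real.rpow_nonneg (hm0 x) _)
    refine h3.trans_eq ?_
    rw [← hpow (m x), mul_left_comm,
      ← Real.rpow_add_of_nonneg (hm0 x) (by linarith) (by norm_num : (0:ℝ) ≤ 2)]
    ring_nf
  have hIint : ∀ (w : X → ℝ), Measurable w → (∀ x, 0 ≤ w x) → (∀ x, w x ≤ m x) →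
      Integrable (fun x => w x ^ (p - 2) * (u x - v x) ^ 2) μ := by
    intro w hwmeas hw0 hwm
    refine (hMint.const_mul 4).mono'
      ((((Real.continuous_rpow_const (by linarith : (0:ℝ) ≤ p - 2)).measurable.comp
        hwmeas).mul ((hu.sub hv).pow_const 2)).aestronglyMeasurable)
      (ae_of_all _ fun x => ?_)
    rw [Real.norm_eq_abs, abs_of_nonneg (mul_nonneg (Real.rpow_nonneg (hw0 x) _) (sq_nonneg _))]
    exact hdom w hw0 hwm x
  have hI1int : Integrable (fun x => |u x| ^ (p - 2) * (u x - v x) ^ 2) μ :=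
    hIint _ hu.abs (fun x => abs_nonneg _) hmu
  have hI2int : Integrable (fun x => |v x| ^ (p - 2) * (u x - v x) ^ 2) μ :=
    hIint _ hv.abs (fun x => abs_nonneg _) hmv
  have hfsq_int : Integrable (fun x => f x ^ 2) μ :=
    (hIint _ hmm hm0 (fun x => le_rfl)).congr (ae_of_all _ fun x => (hfsq x).symm)
  have hgsq_int : Integrable (fun x => g x ^ 2) μ :=
    hMint.congr (ae_of_all _ fun x => (hgsq x).symm)
  have hfg_int : Integrable (fun x => f x * g x) μ :=
    aux_int_mul hfm.aestronglyMeasurable hgm.aestronglyMeasurable hfsq_int hgsq_int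
  -- notation for the integrals
  set Su := ∫ x, |u x| ^ p ∂μ
  set Sv := ∫ x, |v x| ^ p ∂μ
  set I1 := ∫ x, |u x| ^ (p - 2) * (u x - v x) ^ 2 ∂μ
  set I2 := ∫ x, |v x| ^ (p - 2) * (u x - v x) ^ 2 ∂μ
  set V := ∫ x, (v x) ^ 2 ∂μ
  set W := ∫ x, (u x - v x) ^ 2 ∂μ
  have hI1nn : 0 ≤ I1 := integral_nonneg fun x =>
    mul_nonneg (Real.rpow_nonneg (abs_nonneg _) _) (sq_nonneg _)
  have hI2nn : 0 ≤ I2 := integral_nonneg fun x =>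
    mul_nonneg (Real.rpow_nonneg (abs_nonneg _) _) (sq_nonneg _)
  have hSunn : 0 ≤ Su := integral_nonneg fun x => Real.rpow_nonneg (abs_nonneg _) _
  have hSvnn : 0 ≤ Sv := integral_nonneg fun x => Real.rpow_nonneg (abs_nonneg _) _
  have hVnn : 0 ≤ V := integral_nonneg fun x => sq_nonneg _
  have hWnn : 0 ≤ W := integral_nonneg fun x => sq_nonneg _
  -- Step 1: |Su - Sv| ≤ p * sqrt (I1 + I2) * sqrt (Su + Sv)
  have hfI : ∫ x, f x ^ 2 ∂μ ≤ I1 + I2 := by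
    rw [show I1 + I2 = ∫ x, (|u x| ^ (p-2) * (u x - v x)^2 + |v x| ^ (p-2) * (u x - v x)^2) ∂μ
      from (integral_add hI1int hI2int).symm]
    refine integral_mono hfsq_int (hI1int.add hI2int) fun x => ?_
    rw [hfsq x]
    have : m x ^ (p - 2) ≤ |u x| ^ (p - 2) + |v x| ^ (p - 2) := by
      rcases max_cases |u x| |v x| with ⟨h1, _⟩ | ⟨h1, _⟩ <;> rw [hm_def] <;> simp only [h1]
      · exact le_add_of_nonneg_right (Real.rpow_nonneg (abs_nonneg _) _)
      · exact le_add_of_nonneg_left (Real.rpow_nonneg (abs_nonneg _) _)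
    nlinarith [sq_nonneg (u x - v x)]
  have hgS : ∫ x, g x ^ 2 ∂μ ≤ Su + Sv := by
    rw [show Su + Sv = ∫ x, (|u x| ^ p + |v x| ^ p) ∂μ from (integral_add hup hvp).symm]
    refine integral_mono hgsq_int (hup.add hvp) fun x => ?_
    rw [hgsq x]; exact hmp_le x
  have hA : |Su - Sv| ≤ p * (Real.sqrt (I1 + I2) * Real.sqrt (Su + Sv)) := by
    have hd_int : Integrable (fun x => |u x| ^ p - |v x| ^ p) μ := hup.sub hvp
    have step1 : |Su - Sv| ≤ ∫ x, |(|u x| ^ p - |v x| ^ p)| ∂μ := by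
      rw [show Su - Sv = ∫ x, (|u x| ^ p - |v x| ^ p) ∂μ from (integral_sub hup hvp).symm]
      have := norm_integral_le_integral_norm (μ := μ) (fun x => |u x| ^ p - |v x| ^ p)
      simpa [Real.norm_eq_abs] using this
    have step2 : ∫ x, |(|u x| ^ p - |v x| ^ p)| ∂μ ≤ ∫ x, p * (f x * g x) ∂μ := by
      refine integral_mono hd_int.abs (hfg_int.const_mul p) fun x => ?_
      rw [hfg x, ← mul_assoc]
      exact aux_pw hp (u x) (v x)
    have step3 : ∫ x, p * (f x * g x) ∂μ = p * ∫ x, f x * g x ∂μ := integral_const_mul p _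
    have step4 : ∫ x, f x * g x ∂μ ≤ Real.sqrt (I1 + I2) * Real.sqrt (Su + Sv) := by
      refine (aux_cs μ hf0 hg0 hfm.aestronglyMeasurable hgm.aestronglyMeasurable
        hfsq_int hgsq_int).trans ?_
      exact mul_le_mul (Real.sqrt_le_sqrt hfI) (Real.sqrt_le_sqrt hgS)
        (Real.sqrt_nonneg _) (Real.sqrt_nonneg _)
    calc |Su - Sv| ≤ ∫ x, p * (f x * g x) ∂μ := step1.trans step2
      _ = p * ∫ x, f x * g x ∂μ := step3
      _ ≤ p * (Real.sqrt (I1 + I2) * Real.sqrt (Su + Sv)) :=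
          mul_le_mul_of_nonneg_left step4 (by linarith)
  -- Step 2: |∫ v (u - v)| ≤ sqrt V * sqrt W
  have hB : |∫ x, v x * (u x - v x) ∂μ| ≤ Real.sqrt V * Real.sqrt W := by
    have habs2v : Integrable (fun x => |v x| ^ 2) μ :=
      hv2.congr (ae_of_all _ fun x => (sq_abs (v x)).symm)
    have habs2w : Integrable (fun x => |u x - v x| ^ 2) μ :=
      hw2.congr (ae_of_all _ fun x => (sq_abs (u x - v x)).symm)
    have step1 : |∫ x, v x * (u x - v x) ∂μ| ≤ ∫ x, |v x| * |u x - v x| ∂μ := by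
      have := norm_integral_le_integral_norm (μ := μ) (fun x => v x * (u x - v x))
      simpa [Real.norm_eq_abs, abs_mul] using this
    have step2 := aux_cs μ (fun x => abs_nonneg (v x)) (fun x => abs_nonneg (u x - v x))
      hv.abs.aestronglyMeasurable (hu.sub hv).abs.aestronglyMeasurable habs2v habs2w
    have e1 : ∫ x, |v x| ^ 2 ∂μ = V := integral_congr_ae (ae_of_all _ fun x => sq_abs (v x))
    have e2 : ∫ x, |u x - v x| ^ 2 ∂μ = W :=
      integral_congr_ae (ae_of_all _ fun x => sq_abs (u x - v x))
    rw [e1, e2] at step2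
    exact step1.trans step2
  -- Final arithmetic
  set A := Su - Sv
  set B := ∫ x, v x * (u x - v x) ∂μ
  have hprod : A * B ≤ (p * (Real.sqrt (I1 + I2) * Real.sqrt (Su + Sv)))
      * (Real.sqrt V * Real.sqrt W) := by
    calc A * B ≤ |A * B| := le_abs_self _
      _ = |A| * |B| := abs_mul A B
      _ ≤ _ := mul_le_mul hA hB (abs_nonneg _)
          (by positivity)
  have ha2 : Real.sqrt (I1 + I2) ^ 2 = I1 + I2 := Real.sq_sqrt (by linarith)
  have hs2 : Real.sqrt (Su + Sv) ^ 2 = Su + Sv := Real.sq_sqrt (by linarith)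
  have hv2' : Real.sqrt V ^ 2 = V := Real.sq_sqrt hVnn
  have hw2' : Real.sqrt W ^ 2 = W := Real.sq_sqrt hWnn
  have key : A * B ≤ (1/4) * (I1 + I2) + p ^ 2 * (Su + Sv) * V * W := by
    set a := Real.sqrt (I1 + I2) with ha_def
    set b := p * (Real.sqrt (Su + Sv) * (Real.sqrt V * Real.sqrt W)) with hb_def
    have hb2 : b ^ 2 = p ^ 2 * (Su + Sv) * V * W := by
      rw [hb_def, mul_pow, mul_pow, mul_pow, hs2, hv2', hw2']; ring
    have he : p * (a * Real.sqrt (Su + Sv)) * (Real.sqrt V * Real.sqrt W) = a * b := by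
      rw [hb_def]; ring
    rw [he] at hprod
    refine hprod.trans ?_
    nlinarith [sq_nonneg (a / 2 - b), ha2, hb2]
  refine key.trans ?_
  have h2p : (1:ℝ) ≤ (2:ℝ) ^ (2 * p - 4) := by
    have := Real.rpow_le_rpow_of_exponent_le (one_le_two) (by linarith : (0:ℝ) ≤ 2 * p - 4)
    simpa using this
  have hpsq : (0:ℝ) ≤ p ^ 2 := sq_nonneg p
  have hSVW : (0:ℝ) ≤ (Su + Sv) * V * W := by positivity
  have h := mul_le_mul_of_nonneg_right (le_mul_of_one_le_right hpsq h2p) hSVW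
  nlinarith [h]
end
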